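/- Let G be an n-sum of connected multigraphs K and H along an n-element vertex set U (n ≥ 1), and let y be a real number with y ≠ 1. The connectivity matrix A_n is invertible, and denoting by b'_{AB} the entries of its inverse, T(G;1,y) = Σ_{A,B ∈ Γ(U)} b'_{AB} · (y−1)^{|A|+|B|−n−1} · T(K/A;1,y) · T(H/B;1,y), where (y−1)^{|A|+|B|−n−1} is an integer power (zpow, the exponent may be negative). -/

import Mathlib

attribute [local instance] Classical.propDecidable

/-- A multigraph: a finite vertex type, a finite edge index type, and an endpoint
map sending each edge to an unordered pair of vertices. -/
structure Multigraph where
  V : Type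
  E : Type
  [finV : Fintype V]
  [finE : Fintype E]
  ends : E → Sym2 V

attribute [instance] Multigraph.finV Multigraph.finE

namespace Multigraph

/-- Two vertices are related if some edge of `S` has them as its endpoints. -/
def rel (G : Multigraph) (S : Finset G.E) (v w : G.V) : Prop :=
  ∃ e ∈ S, G.ends e = s(v, w)

/-- `ω(S)`: the number of connected components of the spanning subgraph `(V(G), S)`. -/
noncomputable def omega (G : Multigraph) (S : Finset G.E) : ℕ :=
  Nat.card (Quotient (Relation.EqvGen.setoid (G.rel S)))

/-- `ω(G)`: the number of connected components of `G`. -/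
noncomputable def omegaG (G : Multigraph) : ℕ :=
  G.omega Finset.univ

/-- The Negami polynomial `f(G;t,x,y)`. -/
noncomputable def negami (G : Multigraph) (t x y : ℝ) : ℝ :=
  ∑ S : Finset G.E, t ^ G.omega S * x ^ S.card * y ^ (Fintype.card G.E - S.card)

/-- The Tutte polynomial `T(G;x,y)`. -/
noncomputable def tutte (G : Multigraph) (x y : ℝ) : ℝ :=
  ∑ S : Finset G.E,
    (x - 1) ^ (G.omega S - G.omegaG) *
      (y - 1) ^ (G.omega S + S.card - Fintype.card G.V)

end Multigraph

/-- The setoid on `V` extending a setoid `A` on the subset `U`: its nontrivial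
classes are exactly the blocks of `A`. -/
def extendSetoid {V : Type} (U : Set V) (A : Setoid U) : Setoid V where
  r v w := v = w ∨ ∃ (hv : v ∈ U) (hw : w ∈ U), A.r ⟨v, hv⟩ ⟨w, hw⟩
  iseqv := by
    constructor
    · exact fun v => Or.inl rfl
    · rintro v w (rfl | ⟨hv, hw, h⟩)
      · exact Or.inl rfl
      · exact Or.inr ⟨hw, hv, A.symm h⟩
    · rintro v w z (rfl | ⟨hv, hw, h⟩) (rfl | ⟨hw', hz, h'⟩)
      · exact Or.inl rfl
      · exact Or.inr ⟨hw', hz, h'⟩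
      · exact Or.inr ⟨hv, hw, h⟩
      · exact Or.inr ⟨hv, hz, A.trans h h'⟩

namespace Multigraph

/-- The contraction `K/A` of a multigraph `K` by a partition `A` of a subset `U` of
its vertices: all vertices in a common block of `A` are identified. -/
noncomputable def contract (K : Multigraph) {U : Set K.V} (A : Setoid U) : Multigraph where
  V := Quotient (extendSetoid U A)
  E := K.E
  finV := Fintype.ofFinite _
  finE := K.finE
  ends e := (K.ends e).map (Quotient.mk (extendSetoid U A))

/-- `P(S)`: the partition of `U` in which two vertices lie in the same block iff they
lie in the same connected component of the spanning subgraph `(V(K), S)`. -/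
def part (K : Multigraph) (U : Set K.V) (S : Finset K.E) : Setoid U :=
  Setoid.comap Subtype.val (Relation.EqvGen.setoid (K.rel S))

/-- The auxiliary Negami polynomial `f_A(K;t,x,y)`. -/
noncomputable def negamiAux (K : Multigraph) (U : Set K.V) (A : Setoid U) (t x y : ℝ) : ℝ :=
  ∑ S : Finset K.E,
    if K.part U S = A then
      t ^ (K.omega S - Nat.card (Quotient A)) * x ^ S.card *
        y ^ (Fintype.card K.E - S.card)
    else 0

/-- The auxiliary Tutte polynomial `T_A(K;x,y)`. -/
noncomputable def tutteAux (K : Multigraph) (U : Set K.V) (A : Setoid U) (x y : ℝ) : ℝ :=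
  ∑ S : Finset K.E,
    if K.part U S = A then
      (x - 1) ^ (K.omega S - Nat.card (Quotient A)) *
        (y - 1) ^ (K.omega S + S.card - Fintype.card K.V)
    else 0

end Multigraph

/-- The set of partitions of a finite type is finite. -/
instance setoidFinite {α : Type} [Finite α] : Finite (Setoid α) :=
  Finite.of_injective (fun s : Setoid α => s.r) fun a b h => by
    cases a; cases b; simp only at h; subst h; rfl

noncomputable instance setoidFintype {α : Type} [Finite α] : Fintype (Setoid α) :=
  Fintype.ofFinite _

/-- The number of blocks `|A|` of a partition (setoid) `A`. -/
noncomputable def nblocks {α : Type} (A : Setoid α) : ℕ :=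
  Nat.card (Quotient A)

/-- The matrix `T_n(t)` indexed by partitions of `α`, with `(A,B)`-entry
`t^{|A∧B|}` where `A∧B` is the finest common coarsening (the join `A ⊔ B`). -/
noncomputable def Tmat (α : Type) [Finite α] (t : ℝ) :
    Matrix (Setoid α) (Setoid α) ℝ :=
  Matrix.of fun A B => t ^ nblocks (A ⊔ B)

/-- The matrix `L_n(x)` indexed by partitions of `α`, with `(A,B)`-entry
`(x-1)^{|A∧B|-1}` if `|A∧B| + n = |A| + |B|` and `0` otherwise. -/
noncomputable def Lmat (α : Type) [Finite α] (n : ℕ) (x : ℝ) :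
    Matrix (Setoid α) (Setoid α) ℝ :=
  Matrix.of fun A B =>
    if nblocks (A ⊔ B) + n = nblocks A + nblocks B then
      (x - 1) ^ (nblocks (A ⊔ B) - 1)
    else 0

/-- The connectivity matrix `A_n` indexed by partitions of `α`, with `(A,B)`-entry
`1` if `|A∧B| = 1` and `0` otherwise. -/
noncomputable def Amat (α : Type) [Finite α] :
    Matrix (Setoid α) (Setoid α) ℝ :=
  Matrix.of fun A B => if nblocks (A ⊔ B) = 1 then (1 : ℝ) else 0

/-- `G` is an `n`-sum of `K` and `H` along `U`: `V(G) = V(K) ∪ V(H)`,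
`V(K) ∩ V(H) = U`, and `E(G)` is the disjoint union of `E(K)` and `E(H)` with the
inherited endpoint maps. -/
structure NSum (G K H : Multigraph) (U : Set G.V) where
  ιK : K.V → G.V
  ιH : H.V → G.V
  injK : Function.Injective ιK
  injH : Function.Injective ιH
  cover : Set.range ιK ∪ Set.range ιH = Set.univ
  inter : Set.range ιK ∩ Set.range ιH = U
  edgeEquiv : G.E ≃ K.E ⊕ H.E
  endsK : ∀ a, G.ends (edgeEquiv.symm (Sum.inl a)) = (K.ends a).map ιK
  endsH : ∀ a, G.ends (edgeEquiv.symm (Sum.inr a)) = (H.ends a).map ιH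

namespace NSum

variable {G K H : Multigraph} {U : Set G.V}

/-- The copy of a partition `A` of `U` on the corresponding subset of `V(K)`. -/
def pullK (σ : NSum G K H U) (A : Setoid U) : Setoid (σ.ιK ⁻¹' U : Set K.V) :=
  Setoid.comap (fun v => ⟨σ.ιK v.1, v.2⟩) A

/-- The copy of a partition `A` of `U` on the corresponding subset of `V(H)`. -/
def pullH (σ : NSum G K H U) (A : Setoid U) : Setoid (σ.ιH ⁻¹' U : Set H.V) :=
  Setoid.comap (fun v => ⟨σ.ιH v.1, v.2⟩) A

/-- The contraction `K/A` for a partition `A` of the common vertex set `U`. -/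
noncomputable def contractK (σ : NSum G K H U) (A : Setoid U) : Multigraph :=
  K.contract (σ.pullK A)

/-- The contraction `H/B` for a partition `B` of the common vertex set `U`. -/
noncomputable def contractH (σ : NSum G K H U) (B : Setoid U) : Multigraph :=
  H.contract (σ.pullH B)

end NSum


open Relation

section SetoidInfra

variable {α β V W : Type}

lemma setoid_sup_rel {r s : Setoid α} {a b : α} (h : r a b ∨ s a b) : (r ⊔ s) a b := by
  rcases h with h | h
  · exact (Setoid.le_def.mp le_sup_left) h
  · exact (Setoid.le_def.mp le_sup_right) h

lemma nblocks_pos [Finite α] [Nonempty α] (A : Setoid α) : 1 ≤ nblocks A := by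
  have : Nonempty (Quotient A) := ⟨Quotient.mk _ (Classical.arbitrary _)⟩
  exact Nat.card_pos

lemma setoid_eq_top_of_card [Finite α] {s : Setoid α}
    (h : Nat.card (Quotient s) = 1) : s = ⊤ := by
  have hs : Subsingleton (Quotient s) := (Nat.card_eq_one_iff_unique.mp h).1
  refine Setoid.ext fun a b => ⟨fun _ => trivial, fun _ => ?_⟩
  exact Quotient.exact (Subsingleton.elim _ _)

lemma nblocks_top [Finite α] [Nonempty α] : nblocks (⊤ : Setoid α) = 1 := by
  have hsub : Subsingleton (Quotient (⊤ : Setoid α)) :=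
    ⟨fun a b => Quotient.inductionOn₂ a b fun x y => Quotient.sound trivial⟩
  have hne : Nonempty (Quotient (⊤ : Setoid α)) := ⟨Quotient.mk _ (Classical.arbitrary _)⟩
  exact Nat.card_eq_one_iff_unique.mpr ⟨hsub, hne⟩

/-- Transport of setoids along an equivalence, as an order isomorphism. -/
def setoidCongr (e : β ≃ α) : Setoid α ≃o Setoid β where
  toFun s := Setoid.comap e s
  invFun s := Setoid.comap e.symm s
  left_inv s := Setoid.ext fun a b => by simp [Setoid.comap_rel]
  right_inv s := Setoid.ext fun a b => by simp [Setoid.comap_rel]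
  map_rel_iff' := by
    intro s t
    constructor
    · intro h a b hab
      have := @h (e.symm a) (e.symm b) (by show Setoid.comap e s (e.symm a) (e.symm b); simpa [Setoid.comap_rel] using hab)
      have this : Setoid.comap e t (e.symm a) (e.symm b) := this
      simpa [Setoid.comap_rel] using this
    · intro h a b hab
      exact h hab

lemma setoidCongr_sup (e : β ≃ α) (s t : Setoid α) :
    setoidCongr e (s ⊔ t) = setoidCongr e s ⊔ setoidCongr e t :=
  (setoidCongr e).map_sup s t

lemma nblocks_setoidCongr (e : β ≃ α) (s : Setoid α) :
    nblocks (setoidCongr e s) = nblocks s :=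
  Nat.card_congr (Quotient.congr e (fun _ _ => Iff.rfl))

lemma card_compl_range_add [Finite β] (g : α → β) :
    Nat.card {x : β // ∀ a, g a ≠ x} + Nat.card (Set.range g) = Nat.card β := by
  classical
  have e2 : {x : β // ∀ a, g a ≠ x} ≃ {x : β // x ∉ Set.range g} :=
    Equiv.subtypeEquivRight (fun x => by simp [Set.mem_range, eq_comm])
  have e : {x : β // x ∈ Set.range g} ⊕ {x : β // x ∉ Set.range g} ≃ β :=
    Equiv.sumCompl _
  have h1 := Nat.card_congr e
  rw [Nat.card_sum] at h1
  have h3 : Nat.card {x : β // x ∈ Set.range g} = Nat.card (Set.range g) := rfl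
  rw [Nat.card_congr e2]
  omega

section ML

variable (s : Setoid V) (U : Set V) (t : Setoid ↥U)

private noncomputable def mlFun (v : V) :
    {x : Quotient s // ∀ u : ↥U, Quotient.mk s u.1 ≠ x} ⊕
      Quotient (Setoid.comap (Subtype.val : ↥U → V) s ⊔ t) :=
  if h : ∃ u : ↥U, s u.1 v then Sum.inr (Quotient.mk _ h.choose)
  else Sum.inl ⟨Quotient.mk s v, fun u hu => h ⟨u, Quotient.exact hu⟩⟩

private lemma mlFun_spec : s ⊔ extendSetoid U t ≤ Setoid.ker (mlFun s U t) := by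
  apply sup_le
  · intro a b hab
    show mlFun s U t a = mlFun s U t b
    unfold mlFun
    by_cases h : ∃ u : ↥U, s u.1 a
    · have h' : ∃ u : ↥U, s u.1 b := ⟨h.choose, s.trans h.choose_spec hab⟩
      rw [dif_pos h, dif_pos h']
      refine congrArg _ (Quotient.sound (setoid_sup_rel (Or.inl ?_)))
      exact s.trans h.choose_spec (s.trans hab (s.symm h'.choose_spec))
    · have h' : ¬ ∃ u : ↥U, s u.1 b := fun ⟨u, hu⟩ => h ⟨u, s.trans hu (s.symm hab)⟩
      rw [dif_neg h, dif_neg h']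
      exact congrArg _ (Subtype.ext (Quotient.sound hab))
  · intro a b hab
    show mlFun s U t a = mlFun s U t b
    rcases hab with rfl | ⟨ha, hb, htab⟩
    · rfl
    · unfold mlFun
      have hA : ∃ u : ↥U, s u.1 a := ⟨⟨a, ha⟩, s.refl a⟩
      have hB : ∃ u : ↥U, s u.1 b := ⟨⟨b, hb⟩, s.refl b⟩
      rw [dif_pos hA, dif_pos hB]
      refine congrArg _ (Quotient.sound ?_)
      have c1 : (Setoid.comap (Subtype.val : ↥U → V) s ⊔ t) hA.choose ⟨a, ha⟩ :=
        setoid_sup_rel (Or.inl hA.choose_spec)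
      have c2 : (Setoid.comap (Subtype.val : ↥U → V) s ⊔ t) (⟨a, ha⟩ : ↥U) ⟨b, hb⟩ :=
        setoid_sup_rel (Or.inr htab)
      have c3 : (Setoid.comap (Subtype.val : ↥U → V) s ⊔ t) (⟨b, hb⟩ : ↥U) hB.choose :=
        setoid_sup_rel (Or.inl ((s.symm hB.choose_spec)))
      exact Setoid.trans' _ (Setoid.trans' _ c1 c2) c3

private lemma mlInv_spec :
    ∀ u u' : ↥U, (Setoid.comap (Subtype.val : ↥U → V) s ⊔ t) u u' →
      Quotient.mk (s ⊔ extendSetoid U t) u.1 = Quotient.mk (s ⊔ extendSetoid U t) u'.1 := by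
  have : (Setoid.comap (Subtype.val : ↥U → V) s ⊔ t) ≤
      Setoid.ker (fun u : ↥U => Quotient.mk (s ⊔ extendSetoid U t) u.1) := by
    apply sup_le
    · intro u u' h
      exact Quotient.sound (setoid_sup_rel (Or.inl h))
    · intro u u' h
      exact Quotient.sound (setoid_sup_rel (Or.inr (Or.inr ⟨u.2, u'.2, h⟩)))
  exact fun u u' h => this h

noncomputable def mlEquiv :
    Quotient (s ⊔ extendSetoid U t) ≃
      ({x : Quotient s // ∀ u : ↥U, Quotient.mk s u.1 ≠ x} ⊕
        Quotient (Setoid.comap (Subtype.val : ↥U → V) s ⊔ t)) where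
  toFun := Quotient.lift (mlFun s U t) (fun _ _ h => mlFun_spec s U t h)
  invFun x :=
    match x with
    | Sum.inl y => Setoid.map_of_le le_sup_left y.1
    | Sum.inr q => Quotient.lift (fun u : ↥U => Quotient.mk (s ⊔ extendSetoid U t) u.1)
        (mlInv_spec s U t) q
  left_inv := by
    refine Quotient.ind fun v => ?_
    by_cases h : ∃ u : ↥U, s u.1 v
    · simp only [Quotient.lift_mk, mlFun, dif_pos h]
      exact Quotient.sound (setoid_sup_rel (Or.inl h.choose_spec))
    · simp only [Quotient.lift_mk, mlFun, dif_neg h]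
      rfl
  right_inv := by
    rintro (⟨x, hx⟩ | q)
    · obtain ⟨v, rfl⟩ := Quotient.exists_rep x
      have h : ¬ ∃ u : ↥U, s u.1 v := fun ⟨u, hu⟩ => hx u (Quotient.sound hu)
      have hmap : Setoid.map_of_le (le_sup_left : s ≤ s ⊔ extendSetoid U t) (Quotient.mk s v)
          = Quotient.mk _ v := rfl
      simp only [hmap, Quotient.lift_mk, mlFun, dif_neg h]
    · obtain ⟨u, rfl⟩ := Quotient.exists_rep q
      have h : ∃ u' : ↥U, s u'.1 u.1 := ⟨u, s.refl _⟩
      simp only [Quotient.lift_mk, mlFun, dif_pos h]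
      exact congrArg _ (Quotient.sound (setoid_sup_rel (Or.inl h.choose_spec)))

lemma card_quotient_sup_extend [Finite V] :
    Nat.card (Quotient (s ⊔ extendSetoid U t)) +
      Nat.card (Quotient (Setoid.comap (Subtype.val : ↥U → V) s))
    = Nat.card (Quotient s) +
      Nat.card (Quotient (Setoid.comap (Subtype.val : ↥U → V) s ⊔ t)) := by
  have h1 := Nat.card_congr (mlEquiv s U t)
  rw [Nat.card_sum] at h1
  have h2 := card_compl_range_add (fun u : ↥U => Quotient.mk s u.1)
  have h3 : Nat.card (Set.range (fun u : ↥U => Quotient.mk s u.1))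
      = Nat.card (Quotient (Setoid.comap (Subtype.val : ↥U → V) s)) :=
    (Nat.card_congr (Setoid.comapQuotientEquiv Subtype.val s)).symm
  omega

end ML

section ExtendQuot

variable (U : Set V) (t : Setoid ↥U)

private noncomputable def extFun (v : V) : {v : V // v ∉ U} ⊕ Quotient t :=
  if h : v ∈ U then Sum.inr (Quotient.mk t ⟨v, h⟩) else Sum.inl ⟨v, h⟩

private lemma extFun_spec : extendSetoid U t ≤ Setoid.ker (extFun U t) := by
  intro a b hab
  rcases hab with rfl | ⟨ha, hb, htab⟩
  · rfl
  · show extFun U t a = extFun U t b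
    unfold extFun
    rw [dif_pos ha, dif_pos hb]
    exact congrArg _ (Quotient.sound htab)

noncomputable def extendQuotEquiv :
    Quotient (extendSetoid U t) ≃ {v : V // v ∉ U} ⊕ Quotient t where
  toFun := Quotient.lift (extFun U t) (fun _ _ h => extFun_spec U t h)
  invFun x :=
    match x with
    | Sum.inl v => Quotient.mk _ v.1
    | Sum.inr q => Quotient.lift (fun u : ↥U => Quotient.mk (extendSetoid U t) u.1)
        (fun u u' h => Quotient.sound (Or.inr ⟨u.2, u'.2, h⟩)) q
  left_inv := by
    refine Quotient.ind fun v => ?_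
    by_cases h : v ∈ U
    · simp only [Quotient.lift_mk, extFun, dif_pos h]
    · simp only [Quotient.lift_mk, extFun, dif_neg h]
  right_inv := by
    rintro (⟨v, hv⟩ | q)
    · simp only [Quotient.lift_mk, extFun, dif_neg hv]
    · obtain ⟨u, rfl⟩ := Quotient.exists_rep q
      simp only [Quotient.lift_mk, extFun, dif_pos u.2]

lemma card_quotient_extend [Finite V] :
    Nat.card (Quotient (extendSetoid U t)) + Nat.card ↥U
      = Nat.card V + Nat.card (Quotient t) := by
  have h1 := Nat.card_congr (extendQuotEquiv U t)
  rw [Nat.card_sum] at h1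
  classical
  have e : ↥U ⊕ {v : V // v ∉ U} ≃ V := Equiv.sumCompl _
  have h2 := Nat.card_congr e
  rw [Nat.card_sum] at h2
  omega

end ExtendQuot

section MapRel

variable (f : V → W) (hf : Function.Surjective f)

private noncomputable def mrFun (r : V → V → Prop) (w : W) : Quotient (EqvGen.setoid r ⊔ Setoid.ker f) :=
  Quotient.mk _ (hf w).choose

private lemma mrFun_spec (r : V → V → Prop) :
    EqvGen.setoid (Relation.Map r f f) ≤ Setoid.ker (mrFun f hf r) := by
  refine Setoid.eqvGen_le ?_
  rintro w w' ⟨a, b, hab, ha, hb⟩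
  show Quotient.mk _ _ = Quotient.mk _ _
  refine Quotient.sound ?_
  have c1 : (EqvGen.setoid r ⊔ Setoid.ker f) (hf w).choose a :=
    setoid_sup_rel (Or.inr ((hf w).choose_spec.trans ha.symm))
  have c2 : (EqvGen.setoid r ⊔ Setoid.ker f) a b :=
    setoid_sup_rel (Or.inl (EqvGen.rel _ _ hab))
  have c3 : (EqvGen.setoid r ⊔ Setoid.ker f) b (hf w').choose :=
    setoid_sup_rel (Or.inr (hb.trans (hf w').choose_spec.symm))
  exact Setoid.trans' _ (Setoid.trans' _ c1 c2) c3

private lemma mrInv_spec (r : V → V → Prop) :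
    EqvGen.setoid r ⊔ Setoid.ker f ≤
      Setoid.ker (fun v => Quotient.mk (EqvGen.setoid (Relation.Map r f f)) (f v)) := by
  apply sup_le
  · refine Setoid.eqvGen_le ?_
    intro a b hab
    exact Quotient.sound (EqvGen.rel _ _ ⟨a, b, hab, rfl, rfl⟩)
  · intro a b hab
    exact congrArg _ hab

noncomputable def mapRelQuotientEquiv (r : V → V → Prop) :
    Quotient (EqvGen.setoid (Relation.Map r f f)) ≃
      Quotient (EqvGen.setoid r ⊔ Setoid.ker f) where
  toFun := Quotient.lift (mrFun f hf r) (fun _ _ h => mrFun_spec f hf r h)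
  invFun := Quotient.lift (fun v => Quotient.mk (EqvGen.setoid (Relation.Map r f f)) (f v))
    (fun _ _ h => mrInv_spec f r h)
  left_inv := by
    refine Quotient.ind fun w => ?_
    simp only [Quotient.lift_mk, mrFun]
    rw [(hf w).choose_spec]
  right_inv := by
    refine Quotient.ind fun v => ?_
    simp only [Quotient.lift_mk, mrFun]
    exact Quotient.sound (setoid_sup_rel (Or.inr (hf (f v)).choose_spec))

end MapRel

end SetoidInfra
section GraphLemmas

lemma sym2_map_eq_iff {α β : Type} (f : α → β) (z : Sym2 α) (x y : β) :
    z.map f = s(x, y) ↔ ∃ a b, z = s(a, b) ∧ f a = x ∧ f b = y := by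
  induction z using Sym2.ind with
  | _ a b =>
    rw [Sym2.map_pair_eq, Sym2.eq_iff]
    constructor
    · rintro (⟨rfl, rfl⟩ | ⟨rfl, rfl⟩)
      · exact ⟨a, b, rfl, rfl, rfl⟩
      · exact ⟨b, a, Sym2.eq_swap.symm, rfl, rfl⟩
    · rintro ⟨a', b', hab, rfl, rfl⟩
      rw [Sym2.eq_iff] at hab
      rcases hab with ⟨rfl, rfl⟩ | ⟨rfl, rfl⟩
      · exact Or.inl ⟨rfl, rfl⟩
      · exact Or.inr ⟨rfl, rfl⟩

/-- A quotient by a setoid contained in equality is trivial. -/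
def quotEquivOfDiscrete {V : Type} {s : Setoid V} (h : ∀ x y : V, s x y → x = y) :
    Quotient s ≃ V where
  toFun := Quotient.lift id h
  invFun := Quotient.mk s
  left_inv := Quotient.ind fun v => rfl
  right_inv v := rfl

lemma eqvGen_or {V : Type} (r₁ r₂ : V → V → Prop) :
    Relation.EqvGen.setoid (fun x y => r₁ x y ∨ r₂ x y)
      = Relation.EqvGen.setoid r₁ ⊔ Relation.EqvGen.setoid r₂ := by
  apply le_antisymm
  · refine Setoid.eqvGen_le ?_
    rintro x y (h | h)
    · exact setoid_sup_rel (Or.inl (Relation.EqvGen.rel _ _ h))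
    · exact setoid_sup_rel (Or.inr (Relation.EqvGen.rel _ _ h))
  · exact sup_le (Setoid.eqvGen_mono fun x y h => Or.inl h)
      (Setoid.eqvGen_mono fun x y h => Or.inr h)

lemma card_le_quotient_sup_pair {V : Type} [Finite V] (s : Setoid V) (a₀ b₀ : V)
    (r : V → V → Prop)
    (hr : ∀ x y, r x y → (x = a₀ ∧ y = b₀) ∨ (x = b₀ ∧ y = a₀)) :
    Nat.card (Quotient s) ≤ Nat.card (Quotient (s ⊔ Relation.EqvGen.setoid r)) + 1 := by
  classical
  set s' := s ⊔ Relation.EqvGen.setoid r with hs'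
  let t : Setoid V :=
    ⟨fun u v => s u v ∨ ((s u a₀ ∨ s u b₀) ∧ (s v a₀ ∨ s v b₀)), by
      constructor
      · exact fun v => Or.inl (s.refl v)
      · rintro u v (h | ⟨h1, h2⟩)
        · exact Or.inl (s.symm h)
        · exact Or.inr ⟨h2, h1⟩
      · rintro u v w (h | ⟨h1, h2⟩) (h' | ⟨h1', h2'⟩)
        · exact Or.inl (s.trans h h')
        · exact Or.inr ⟨h1'.imp (s.trans h) (s.trans h), h2'⟩
        · exact Or.inr ⟨h1, Or.imp (fun hh => s.trans (s.symm h') hh)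
            (fun hh => s.trans (s.symm h') hh) h2⟩
        · exact Or.inr ⟨h1, h2'⟩⟩
  have hle : s' ≤ t := by
    apply sup_le
    · exact fun x y h => Or.inl h
    · refine Setoid.eqvGen_le ?_
      intro x y hxy
      rcases hr x y hxy with ⟨rfl, rfl⟩ | ⟨rfl, rfl⟩
      · exact Or.inr ⟨Or.inl (s.refl _), Or.inr (s.refl _)⟩
      · exact Or.inr ⟨Or.inr (s.refl _), Or.inl (s.refl _)⟩
  let g : Quotient s → Quotient s' ⊕ Unit := fun x =>
    if x = Quotient.mk s a₀ then Sum.inr () else Sum.inl (Setoid.map_of_le le_sup_left x)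
  have hg : Function.Injective g := by
    intro x y hxy
    by_cases hx : x = Quotient.mk s a₀ <;> by_cases hy : y = Quotient.mk s a₀
    · rw [hx, hy]
    · simp only [g, if_pos hx, if_neg hy] at hxy
      exact absurd hxy (by simp)
    · simp only [g, if_neg hx, if_pos hy] at hxy
      exact absurd hxy (by simp)
    · simp only [g, if_neg hx, if_neg hy, Sum.inl.injEq] at hxy
      obtain ⟨u, rfl⟩ := Quotient.exists_rep x
      obtain ⟨v, rfl⟩ := Quotient.exists_rep y
      have huv : s' u v := Quotient.exact hxy
      rcases hle huv with h | ⟨h1, h2⟩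
      · exact Quotient.sound h
      · rcases h1 with h1 | h1
        · exact absurd (Quotient.sound h1) hx
        · rcases h2 with h2 | h2
          · exact absurd (Quotient.sound h2) hy
          · exact Quotient.sound (s.trans h1 (s.symm h2))
  have hcard := Nat.card_le_card_of_injective g hg
  rw [Nat.card_sum] at hcard
  simpa using hcard

namespace Multigraph

variable (K : Multigraph)

lemma rel_insert (e : K.E) (S : Finset K.E) :
    K.rel (insert e S) = fun x y => (K.ends e = s(x, y)) ∨ K.rel S x y := by
  funext x y
  simp only [rel, Finset.mem_insert, eq_iff_iff]
  constructor
  · rintro ⟨e', (rfl | he'), h⟩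
    · exact Or.inl h
    · exact Or.inr ⟨e', he', h⟩
  · rintro (h | ⟨e', he', h⟩)
    · exact ⟨e, Or.inl rfl, h⟩
    · exact ⟨e', Or.inr he', h⟩

lemma omega_empty : K.omega ∅ = Fintype.card K.V := by
  have h : ∀ x y : K.V, Relation.EqvGen.setoid (K.rel ∅) x y → x = y := by
    intro x y h
    have : Relation.EqvGen.setoid (K.rel ∅) ≤ Setoid.ker id :=
      Setoid.eqvGen_le (by rintro a b ⟨e, he, -⟩; exact absurd he (Finset.notMem_empty e))
    exact this h
  rw [omega, Nat.card_congr (quotEquivOfDiscrete h), Nat.card_eq_fintype_card]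

lemma card_V_le_omega_add_card (S : Finset K.E) :
    Fintype.card K.V ≤ K.omega S + S.card := by
  classical
  induction S using Finset.induction_on with
  | empty => rw [omega_empty]; simp
  | @insert e S he ih =>
    have key : K.omega S ≤ K.omega (insert e S) + 1 := by
      obtain ⟨a₀, b₀, hab⟩ : ∃ a b, K.ends e = s(a, b) :=
        Sym2.ind (fun a b => ⟨a, b, rfl⟩) (K.ends e)
      have hrw : Relation.EqvGen.setoid (K.rel (insert e S))
          = Relation.EqvGen.setoid (K.rel S) ⊔ Relation.EqvGen.setoid (fun x y => K.ends e = s(x, y)) := by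
        rw [rel_insert]
        rw [show (fun x y => K.ends e = s(x, y) ∨ K.rel S x y)
            = (fun x y => K.rel S x y ∨ K.ends e = s(x, y)) from funext fun x => funext fun y => by
          simp [or_comm]]
        exact eqvGen_or _ _
      have := card_le_quotient_sup_pair (Relation.EqvGen.setoid (K.rel S)) a₀ b₀
        (fun x y => K.ends e = s(x, y))
        (by intro x y hxy; rw [hab, Sym2.eq_iff] at hxy
            rcases hxy with ⟨rfl, rfl⟩ | ⟨rfl, rfl⟩
            · exact Or.inl ⟨rfl, rfl⟩
            · exact Or.inr ⟨rfl, rfl⟩)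
      unfold omega
      rw [hrw]
      exact this
    rw [Finset.card_insert_of_notMem he]
    omega

lemma nblocks_part_le (U' : Set K.V) (S : Finset K.E) :
    nblocks (K.part U' S) ≤ K.omega S := by
  have h1 := Nat.card_congr (Setoid.comapQuotientEquiv (Subtype.val : ↥U' → K.V)
    (Relation.EqvGen.setoid (K.rel S)))
  have h2 : Nat.card (Set.range (Quotient.mk'' ∘ (Subtype.val : ↥U' → K.V)))
      ≤ Nat.card (Quotient (Relation.EqvGen.setoid (K.rel S))) :=
    Nat.card_le_card_of_injective Subtype.val Subtype.val_injective
  unfold nblocks part omega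
  omega

lemma rel_contract (U' : Set K.V) (A : Setoid ↥U') (S : Finset K.E) :
    (K.contract A).rel S = Relation.Map (K.rel S)
      (Quotient.mk (extendSetoid U' A)) (Quotient.mk (extendSetoid U' A)) := by
  funext x y
  simp only [rel, contract, Relation.Map, eq_iff_iff]
  constructor
  · rintro ⟨e, he, h⟩
    erw [sym2_map_eq_iff] at h
    obtain ⟨a, b, hab, ha, hb⟩ := h
    exact ⟨a, b, ⟨e, he, hab⟩, ha, hb⟩
  · rintro ⟨a, b, ⟨e, he, hab⟩, ha, hb⟩
    exact ⟨e, he, by erw [sym2_map_eq_iff]; exact ⟨a, b, hab, ha, hb⟩⟩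

lemma ker_quotient_mk {V : Type} (s : Setoid V) : Setoid.ker (Quotient.mk s) = s :=
  Setoid.ker_mk_eq s

lemma omega_contract (U' : Set K.V) (A : Setoid ↥U') (S : Finset K.E) :
    (K.contract A).omega S + nblocks (K.part U' S)
      = K.omega S + nblocks (K.part U' S ⊔ A) := by
  unfold omega
  rw [rel_contract]
  erw [Nat.card_congr (mapRelQuotientEquiv (Quotient.mk (extendSetoid U' A))
    (fun q => Quotient.exists_rep q) (K.rel S))]
  rw [ker_quotient_mk]
  exact card_quotient_sup_extend (Relation.EqvGen.setoid (K.rel S)) U' A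

lemma card_contract_V (U' : Set K.V) (A : Setoid ↥U') :
    Fintype.card (K.contract A).V + Nat.card ↥U' = Fintype.card K.V + nblocks A := by
  have h := card_quotient_extend U' A
  rw [← Nat.card_eq_fintype_card, ← Nat.card_eq_fintype_card]
  exact h

lemma part_univ_eq_top (U' : Set K.V) (hK : K.omegaG = 1) :
    K.part U' Finset.univ = ⊤ := by
  have hs : Relation.EqvGen.setoid (K.rel Finset.univ) = ⊤ := setoid_eq_top_of_card hK
  unfold part
  rw [hs]
  refine Setoid.ext fun a b => ⟨fun _ => trivial, fun _ => trivial⟩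

end Multigraph

end GraphLemmas
section ML2

variable {V : Type} (R₁ R₂ : Set V)

/-- Inclusion of the intersection in the first set. -/
def incl1 : ↥(R₁ ∩ R₂) → ↥R₁ := fun u => ⟨u.1, u.2.1⟩

/-- Inclusion of the intersection in the second set. -/
def incl2 : ↥(R₁ ∩ R₂) → ↥R₂ := fun u => ⟨u.1, u.2.2⟩

lemma mem2_of_cover (hcov : R₁ ∪ R₂ = Set.univ) {v : V} (h1 : v ∉ R₁) : v ∈ R₂ := by
  have hv : v ∈ R₁ ∪ R₂ := by rw [hcov]; trivial
  exact hv.resolve_left h1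

variable (hcov : R₁ ∪ R₂ = Set.univ) (t₁ : Setoid ↥R₁) (t₂ : Setoid ↥R₂)

/-- The glued setoid on the intersection. -/
abbrev ml2C : Setoid ↥(R₁ ∩ R₂) :=
  Setoid.comap (incl1 R₁ R₂) t₁ ⊔ Setoid.comap (incl2 R₁ R₂) t₂

private noncomputable def ml2Fun (v : V) :
    {x : Quotient t₁ // ∀ u : ↥(R₁ ∩ R₂), Quotient.mk t₁ (incl1 R₁ R₂ u) ≠ x} ⊕
    ({x : Quotient t₂ // ∀ u : ↥(R₁ ∩ R₂), Quotient.mk t₂ (incl2 R₁ R₂ u) ≠ x} ⊕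
      Quotient (ml2C R₁ R₂ t₁ t₂)) :=
  if h1 : v ∈ R₁ then
    if hu : ∃ u : ↥(R₁ ∩ R₂), t₁ (incl1 R₁ R₂ u) ⟨v, h1⟩ then
      Sum.inr (Sum.inr (Quotient.mk _ hu.choose))
    else Sum.inl ⟨Quotient.mk t₁ ⟨v, h1⟩, fun u hu' => hu ⟨u, Quotient.exact hu'⟩⟩
  else
    if hu : ∃ u : ↥(R₁ ∩ R₂), t₂ (incl2 R₁ R₂ u) ⟨v, mem2_of_cover R₁ R₂ hcov h1⟩ then
      Sum.inr (Sum.inr (Quotient.mk _ hu.choose))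
    else Sum.inr (Sum.inl ⟨Quotient.mk t₂ ⟨v, mem2_of_cover R₁ R₂ hcov h1⟩,
      fun u hu' => hu ⟨u, Quotient.exact hu'⟩⟩)

private lemma ml2Fun_eq1 {v : V} (h1 : v ∈ R₁) (u : ↥(R₁ ∩ R₂))
    (h : t₁ (incl1 R₁ R₂ u) ⟨v, h1⟩) :
    ml2Fun R₁ R₂ hcov t₁ t₂ v = Sum.inr (Sum.inr (Quotient.mk _ u)) := by
  have hu : ∃ u : ↥(R₁ ∩ R₂), t₁ (incl1 R₁ R₂ u) ⟨v, h1⟩ := ⟨u, h⟩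
  unfold ml2Fun
  rw [dif_pos h1, dif_pos hu]
  refine congrArg _ (congrArg _ (Quotient.sound (setoid_sup_rel (Or.inl ?_))))
  exact t₁.trans hu.choose_spec (t₁.symm h)

private lemma ml2Fun_eq2 {v : V} (h1 : v ∉ R₁) (h2 : v ∈ R₂) (u : ↥(R₁ ∩ R₂))
    (h : t₂ (incl2 R₁ R₂ u) ⟨v, h2⟩) :
    ml2Fun R₁ R₂ hcov t₁ t₂ v = Sum.inr (Sum.inr (Quotient.mk _ u)) := by
  have hu : ∃ u : ↥(R₁ ∩ R₂), t₂ (incl2 R₁ R₂ u) ⟨v, mem2_of_cover R₁ R₂ hcov h1⟩ := ⟨u, h⟩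
  unfold ml2Fun
  rw [dif_neg h1, dif_pos hu]
  refine congrArg _ (congrArg _ (Quotient.sound (setoid_sup_rel (Or.inr ?_))))
  exact t₂.trans hu.choose_spec (t₂.symm h)

private lemma ml2Fun_spec :
    extendSetoid R₁ t₁ ⊔ extendSetoid R₂ t₂ ≤ Setoid.ker (ml2Fun R₁ R₂ hcov t₁ t₂) := by
  apply sup_le
  · rintro a b (rfl | ⟨ha, hb, hab⟩)
    · rfl
    · show ml2Fun R₁ R₂ hcov t₁ t₂ a = ml2Fun R₁ R₂ hcov t₁ t₂ b
      by_cases hu : ∃ u : ↥(R₁ ∩ R₂), t₁ (incl1 R₁ R₂ u) ⟨a, ha⟩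
      · obtain ⟨u, h⟩ := hu
        rw [ml2Fun_eq1 R₁ R₂ hcov t₁ t₂ ha u h,
          ml2Fun_eq1 R₁ R₂ hcov t₁ t₂ hb u (t₁.trans h hab)]
      · have hu' : ¬ ∃ u : ↥(R₁ ∩ R₂), t₁ (incl1 R₁ R₂ u) ⟨b, hb⟩ :=
          fun ⟨u, h⟩ => hu ⟨u, t₁.trans h (t₁.symm hab)⟩
        unfold ml2Fun
        rw [dif_pos ha, dif_pos hb, dif_neg hu, dif_neg hu']
        exact congrArg _ (Subtype.ext (Quotient.sound hab))
  · rintro a b (rfl | ⟨ha, hb, hab⟩)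
    · rfl
    · show ml2Fun R₁ R₂ hcov t₁ t₂ a = ml2Fun R₁ R₂ hcov t₁ t₂ b
      by_cases h1a : a ∈ R₁ <;> by_cases h1b : b ∈ R₁
      · -- both in R₁, hence both in the intersection
        rw [ml2Fun_eq1 R₁ R₂ hcov t₁ t₂ h1a ⟨a, ⟨h1a, ha⟩⟩ (t₁.refl _),
          ml2Fun_eq1 R₁ R₂ hcov t₁ t₂ h1b ⟨b, ⟨h1b, hb⟩⟩ (t₁.refl _)]
        refine congrArg _ (congrArg _ (Quotient.sound (setoid_sup_rel (Or.inr ?_))))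
        exact hab
      · rw [ml2Fun_eq1 R₁ R₂ hcov t₁ t₂ h1a ⟨a, ⟨h1a, ha⟩⟩ (t₁.refl _),
          ml2Fun_eq2 R₁ R₂ hcov t₁ t₂ h1b hb ⟨a, ⟨h1a, ha⟩⟩ hab]
      · rw [ml2Fun_eq1 R₁ R₂ hcov t₁ t₂ h1b ⟨b, ⟨h1b, hb⟩⟩ (t₁.refl _),
          ml2Fun_eq2 R₁ R₂ hcov t₁ t₂ h1a ha ⟨b, ⟨h1b, hb⟩⟩ (t₂.symm hab)]
      · by_cases hu : ∃ u : ↥(R₁ ∩ R₂), t₂ (incl2 R₁ R₂ u) ⟨a, ha⟩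
        · obtain ⟨u, h⟩ := hu
          rw [ml2Fun_eq2 R₁ R₂ hcov t₁ t₂ h1a ha u h,
            ml2Fun_eq2 R₁ R₂ hcov t₁ t₂ h1b hb u (t₂.trans h hab)]
        · have hu2 : ¬ ∃ u : ↥(R₁ ∩ R₂), t₂ (incl2 R₁ R₂ u)
              ⟨a, mem2_of_cover R₁ R₂ hcov h1a⟩ := hu
          have hu2' : ¬ ∃ u : ↥(R₁ ∩ R₂), t₂ (incl2 R₁ R₂ u)
              ⟨b, mem2_of_cover R₁ R₂ hcov h1b⟩ :=
            fun ⟨u, h⟩ => hu ⟨u, t₂.trans h (t₂.symm hab)⟩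
          unfold ml2Fun
          rw [dif_neg h1a, dif_neg h1b, dif_neg hu2, dif_neg hu2']
          exact congrArg _ (congrArg _ (Subtype.ext (Quotient.sound hab)))

private lemma ml2Inv_spec3 :
    ∀ u u' : ↥(R₁ ∩ R₂), (ml2C R₁ R₂ t₁ t₂) u u' →
      Quotient.mk (extendSetoid R₁ t₁ ⊔ extendSetoid R₂ t₂) u.1
        = Quotient.mk (extendSetoid R₁ t₁ ⊔ extendSetoid R₂ t₂) u'.1 := by
  have : (ml2C R₁ R₂ t₁ t₂) ≤ Setoid.ker
      (fun u : ↥(R₁ ∩ R₂) => Quotient.mk (extendSetoid R₁ t₁ ⊔ extendSetoid R₂ t₂) u.1) := by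
    apply sup_le
    · intro u u' h
      exact Quotient.sound (setoid_sup_rel (Or.inl (Or.inr ⟨u.2.1, u'.2.1, h⟩)))
    · intro u u' h
      exact Quotient.sound (setoid_sup_rel (Or.inr (Or.inr ⟨u.2.2, u'.2.2, h⟩)))
  exact fun u u' h => this h

noncomputable def ml2Equiv :
    Quotient (extendSetoid R₁ t₁ ⊔ extendSetoid R₂ t₂) ≃
      ({x : Quotient t₁ // ∀ u : ↥(R₁ ∩ R₂), Quotient.mk t₁ (incl1 R₁ R₂ u) ≠ x} ⊕
      ({x : Quotient t₂ // ∀ u : ↥(R₁ ∩ R₂), Quotient.mk t₂ (incl2 R₁ R₂ u) ≠ x} ⊕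
        Quotient (ml2C R₁ R₂ t₁ t₂))) where
  toFun := Quotient.lift (ml2Fun R₁ R₂ hcov t₁ t₂) (fun _ _ h => ml2Fun_spec R₁ R₂ hcov t₁ t₂ h)
  invFun x :=
    match x with
    | Sum.inl y => Quotient.lift (fun a : ↥R₁ => Quotient.mk _ a.1)
        (fun a b h => Quotient.sound (setoid_sup_rel (Or.inl (Or.inr ⟨a.2, b.2, h⟩)))) y.1
    | Sum.inr (Sum.inl y) => Quotient.lift (fun a : ↥R₂ => Quotient.mk _ a.1)
        (fun a b h => Quotient.sound (setoid_sup_rel (Or.inr (Or.inr ⟨a.2, b.2, h⟩)))) y.1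
    | Sum.inr (Sum.inr q) => Quotient.lift
        (fun u : ↥(R₁ ∩ R₂) => Quotient.mk (extendSetoid R₁ t₁ ⊔ extendSetoid R₂ t₂) u.1)
        (ml2Inv_spec3 R₁ R₂ t₁ t₂) q
  left_inv := by
    refine Quotient.ind fun v => ?_
    by_cases h1 : v ∈ R₁
    · by_cases hu : ∃ u : ↥(R₁ ∩ R₂), t₁ (incl1 R₁ R₂ u) ⟨v, h1⟩
      · obtain ⟨u, h⟩ := hu
        rw [Quotient.lift_mk, ml2Fun_eq1 R₁ R₂ hcov t₁ t₂ h1 u h]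
        exact Quotient.sound (setoid_sup_rel (Or.inl (Or.inr ⟨u.2.1, h1, h⟩)))
      · simp only [Quotient.lift_mk, ml2Fun, dif_pos h1, dif_neg hu]
    · by_cases hu : ∃ u : ↥(R₁ ∩ R₂), t₂ (incl2 R₁ R₂ u) ⟨v, mem2_of_cover R₁ R₂ hcov h1⟩
      · obtain ⟨u, h⟩ := hu
        rw [Quotient.lift_mk, ml2Fun_eq2 R₁ R₂ hcov t₁ t₂ h1 (mem2_of_cover R₁ R₂ hcov h1) u h]
        exact Quotient.sound (setoid_sup_rel (Or.inr (Or.inr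
          ⟨u.2.2, mem2_of_cover R₁ R₂ hcov h1, h⟩)))
      · simp only [Quotient.lift_mk, ml2Fun, dif_neg h1, dif_neg hu]
  right_inv := by
    rintro (⟨x, hx⟩ | (⟨x, hx⟩ | q))
    · obtain ⟨a, rfl⟩ := Quotient.exists_rep x
      have hu : ¬ ∃ u : ↥(R₁ ∩ R₂), t₁ (incl1 R₁ R₂ u) ⟨a.1, a.2⟩ :=
        fun ⟨u, h⟩ => hx u (Quotient.sound h)
      simp only [Quotient.lift_mk, ml2Fun, dif_pos a.2, dif_neg hu]
    · obtain ⟨a, rfl⟩ := Quotient.exists_rep x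
      have h1 : a.1 ∉ R₁ := by
        intro h1
        exact hx ⟨a.1, ⟨h1, a.2⟩⟩ rfl
      have hu : ¬ ∃ u : ↥(R₁ ∩ R₂), t₂ (incl2 R₁ R₂ u)
          ⟨a.1, mem2_of_cover R₁ R₂ hcov h1⟩ :=
        fun ⟨u, h⟩ => hx u (Quotient.sound h)
      simp only [Quotient.lift_mk, ml2Fun, dif_neg h1, dif_neg hu]
    · obtain ⟨u, rfl⟩ := Quotient.exists_rep q
      simp only [Quotient.lift_mk]
      rw [ml2Fun_eq1 R₁ R₂ hcov t₁ t₂ u.2.1 u (t₁.refl _)]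

include hcov in
lemma card_quotient_sup_extend_extend [Finite V] :
    Nat.card (Quotient (extendSetoid R₁ t₁ ⊔ extendSetoid R₂ t₂))
      + Nat.card (Quotient (Setoid.comap (incl1 R₁ R₂) t₁))
      + Nat.card (Quotient (Setoid.comap (incl2 R₁ R₂) t₂))
    = Nat.card (Quotient t₁) + Nat.card (Quotient t₂)
      + Nat.card (Quotient (ml2C R₁ R₂ t₁ t₂)) := by
  have h1 := Nat.card_congr (ml2Equiv R₁ R₂ hcov t₁ t₂)
  rw [Nat.card_sum, Nat.card_sum] at h1
  have h2 := card_compl_range_add (fun u : ↥(R₁ ∩ R₂) => Quotient.mk t₁ (incl1 R₁ R₂ u))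
  have h3 := card_compl_range_add (fun u : ↥(R₁ ∩ R₂) => Quotient.mk t₂ (incl2 R₁ R₂ u))
  have h4 : Nat.card (Set.range (fun u : ↥(R₁ ∩ R₂) => Quotient.mk t₁ (incl1 R₁ R₂ u)))
      = Nat.card (Quotient (Setoid.comap (incl1 R₁ R₂) t₁)) :=
    (Nat.card_congr (Setoid.comapQuotientEquiv (incl1 R₁ R₂) t₁)).symm
  have h5 : Nat.card (Set.range (fun u : ↥(R₁ ∩ R₂) => Quotient.mk t₂ (incl2 R₁ R₂ u)))
      = Nat.card (Quotient (Setoid.comap (incl2 R₁ R₂) t₂)) :=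
    (Nat.card_congr (Setoid.comapQuotientEquiv (incl2 R₁ R₂) t₂)).symm
  omega

end ML2
lemma eqvGen_map_injective {A V : Type} (ι : A → V) (hι : Function.Injective ι)
    (r : A → A → Prop) :
    Relation.EqvGen.setoid (Relation.Map r ι ι)
      = extendSetoid (Set.range ι)
          (setoidCongr (Equiv.ofInjective ι hι).symm (Relation.EqvGen.setoid r)) := by
  apply le_antisymm
  · refine Setoid.eqvGen_le ?_
    rintro x y ⟨a, b, hab, rfl, rfl⟩
    refine Or.inr ⟨⟨a, rfl⟩, ⟨b, rfl⟩, ?_⟩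
    show Relation.EqvGen.setoid r ((Equiv.ofInjective ι hι).symm ⟨ι a, _⟩)
      ((Equiv.ofInjective ι hι).symm ⟨ι b, _⟩)
    have ha : (Equiv.ofInjective ι hι).symm ⟨ι a, ⟨a, rfl⟩⟩ = a :=
      Equiv.ofInjective_symm_apply hι a
    have hb : (Equiv.ofInjective ι hι).symm ⟨ι b, ⟨b, rfl⟩⟩ = b :=
      Equiv.ofInjective_symm_apply hι b
    rw [ha, hb]
    exact Relation.EqvGen.rel _ _ hab
  · intro x y hxy
    rcases hxy with rfl | ⟨hx, hy, h⟩
    · exact (Relation.EqvGen.setoid _).refl x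
    · have key : Relation.EqvGen.setoid r ≤
          Setoid.comap ι (Relation.EqvGen.setoid (Relation.Map r ι ι)) :=
        Setoid.eqvGen_le (fun a b hab => Relation.EqvGen.rel _ _ ⟨a, b, hab, rfl, rfl⟩)
      have h2 := key h
      rw [Setoid.comap_rel] at h2
      rwa [Equiv.apply_ofInjective_symm hι, Equiv.apply_ofInjective_symm hι] at h2

namespace NSum

variable {G K H : Multigraph} {U : Set G.V} (σ : NSum G K H U)

lemma subset_rangeK : U ⊆ Set.range σ.ιK := by
  intro x hx
  have h : x ∈ Set.range σ.ιK ∩ Set.range σ.ιH := by rw [σ.inter]; exact hx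
  exact h.1

lemma subset_rangeH : U ⊆ Set.range σ.ιH := by
  intro x hx
  have h : x ∈ Set.range σ.ιK ∩ Set.range σ.ιH := by rw [σ.inter]; exact hx
  exact h.2

noncomputable def eK : ↥(σ.ιK ⁻¹' U) ≃ ↥U :=
  Equiv.ofBijective (fun v => ⟨σ.ιK v.1, v.2⟩) (by
    constructor
    · intro a b h
      exact Subtype.ext (σ.injK (congrArg Subtype.val h))
    · intro u
      obtain ⟨v, hv⟩ := σ.subset_rangeK u.2
      exact ⟨⟨v, by rw [Set.mem_preimage, hv]; exact u.2⟩, Subtype.ext hv⟩)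

noncomputable def eH : ↥(σ.ιH ⁻¹' U) ≃ ↥U :=
  Equiv.ofBijective (fun v => ⟨σ.ιH v.1, v.2⟩) (by
    constructor
    · intro a b h
      exact Subtype.ext (σ.injH (congrArg Subtype.val h))
    · intro u
      obtain ⟨v, hv⟩ := σ.subset_rangeH u.2
      exact ⟨⟨v, by rw [Set.mem_preimage, hv]; exact u.2⟩, Subtype.ext hv⟩)

/-- The partition of `U` induced by a subset of the edges of `K`. -/
noncomputable def partKU (S : Finset K.E) : Setoid ↥U :=
  setoidCongr σ.eK.symm (K.part (σ.ιK ⁻¹' U) S)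

/-- The partition of `U` induced by a subset of the edges of `H`. -/
noncomputable def partHU (S : Finset H.E) : Setoid ↥U :=
  setoidCongr σ.eH.symm (H.part (σ.ιH ⁻¹' U) S)

lemma mapK_pullK (A : Setoid ↥U) : setoidCongr σ.eK.symm (σ.pullK A) = A := by
  refine Setoid.ext fun a b => ?_
  show (σ.pullK A) (σ.eK.symm a) (σ.eK.symm b) ↔ A a b
  show A (σ.eK (σ.eK.symm a)) (σ.eK (σ.eK.symm b)) ↔ A a b
  rw [Equiv.apply_symm_apply, Equiv.apply_symm_apply]

lemma mapH_pullH (A : Setoid ↥U) : setoidCongr σ.eH.symm (σ.pullH A) = A := by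
  refine Setoid.ext fun a b => ?_
  show (σ.pullH A) (σ.eH.symm a) (σ.eH.symm b) ↔ A a b
  show A (σ.eH (σ.eH.symm a)) (σ.eH (σ.eH.symm b)) ↔ A a b
  rw [Equiv.apply_symm_apply, Equiv.apply_symm_apply]

lemma omega_contractK (A : Setoid ↥U) (S : Finset K.E) :
    (σ.contractK A).omega S + nblocks (σ.partKU S)
      = K.omega S + nblocks (σ.partKU S ⊔ A) := by
  have h := K.omega_contract (σ.ιK ⁻¹' U) (σ.pullK A) S
  have e1 : nblocks (σ.partKU S) = nblocks (K.part (σ.ιK ⁻¹' U) S) :=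
    nblocks_setoidCongr _ _
  have e2 : nblocks (σ.partKU S ⊔ A) = nblocks (K.part (σ.ιK ⁻¹' U) S ⊔ σ.pullK A) := by
    have : σ.partKU S ⊔ A
        = setoidCongr σ.eK.symm (K.part (σ.ιK ⁻¹' U) S ⊔ σ.pullK A) := by
      rw [setoidCongr_sup, mapK_pullK]
      rfl
    rw [this, nblocks_setoidCongr]
  rw [e1, e2]
  exact h

lemma omega_contractH (B : Setoid ↥U) (S : Finset H.E) :
    (σ.contractH B).omega S + nblocks (σ.partHU S)
      = H.omega S + nblocks (σ.partHU S ⊔ B) := by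
  have h := H.omega_contract (σ.ιH ⁻¹' U) (σ.pullH B) S
  have e1 : nblocks (σ.partHU S) = nblocks (H.part (σ.ιH ⁻¹' U) S) :=
    nblocks_setoidCongr _ _
  have e2 : nblocks (σ.partHU S ⊔ B) = nblocks (H.part (σ.ιH ⁻¹' U) S ⊔ σ.pullH B) := by
    have : σ.partHU S ⊔ B
        = setoidCongr σ.eH.symm (H.part (σ.ιH ⁻¹' U) S ⊔ σ.pullH B) := by
      rw [setoidCongr_sup, mapH_pullH]
      rfl
    rw [this, nblocks_setoidCongr]
  rw [e1, e2]
  exact h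

lemma nblocks_pullK (A : Setoid ↥U) : nblocks (σ.pullK A) = nblocks A :=
  (nblocks_setoidCongr σ.eK.symm (σ.pullK A)).symm.trans
    (congrArg nblocks (σ.mapK_pullK A))

lemma nblocks_pullH (B : Setoid ↥U) : nblocks (σ.pullH B) = nblocks B :=
  (nblocks_setoidCongr σ.eH.symm (σ.pullH B)).symm.trans
    (congrArg nblocks (σ.mapH_pullH B))

lemma card_contractK_V (A : Setoid ↥U) :
    Fintype.card (σ.contractK A).V + Nat.card ↥U = Fintype.card K.V + nblocks A := by
  have h := K.card_contract_V (σ.ιK ⁻¹' U) (σ.pullK A)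
  have e1 : Nat.card ↥(σ.ιK ⁻¹' U) = Nat.card ↥U := Nat.card_congr σ.eK
  have e2 := σ.nblocks_pullK A
  rw [show σ.contractK A = K.contract (σ.pullK A) from rfl]
  omega

lemma card_contractH_V (B : Setoid ↥U) :
    Fintype.card (σ.contractH B).V + Nat.card ↥U = Fintype.card H.V + nblocks B := by
  have h := H.card_contract_V (σ.ιH ⁻¹' U) (σ.pullH B)
  have e1 : Nat.card ↥(σ.ιH ⁻¹' U) = Nat.card ↥U := Nat.card_congr σ.eH
  have e2 := σ.nblocks_pullH B
  rw [show σ.contractH B = H.contract (σ.pullH B) from rfl]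
  omega

lemma partKU_univ (hK : K.omegaG = 1) : σ.partKU Finset.univ = ⊤ := by
  unfold partKU
  rw [K.part_univ_eq_top _ hK]
  exact (setoidCongr σ.eK.symm).map_top

lemma partHU_univ (hH : H.omegaG = 1) : σ.partHU Finset.univ = ⊤ := by
  unfold partHU
  rw [H.part_univ_eq_top _ hH]
  exact (setoidCongr σ.eH.symm).map_top

lemma omegaG_contractK (A : Setoid ↥U) (hK : K.omegaG = 1) (hne : Nonempty ↥U) :
    (σ.contractK A).omegaG = 1 := by
  have h := σ.omega_contractK A Finset.univ
  rw [σ.partKU_univ hK, top_sup_eq, nblocks_top] at h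
  have h2 : K.omega Finset.univ = 1 := hK
  show (σ.contractK A).omega Finset.univ = 1
  exact Nat.add_right_cancel (h.trans (congrArg (· + 1) h2))

lemma omegaG_contractH (B : Setoid ↥U) (hH : H.omegaG = 1) (hne : Nonempty ↥U) :
    (σ.contractH B).omegaG = 1 := by
  have h := σ.omega_contractH B Finset.univ
  rw [σ.partHU_univ hH, top_sup_eq, nblocks_top] at h
  have h2 : H.omega Finset.univ = 1 := hH
  show (σ.contractH B).omega Finset.univ = 1
  exact Nat.add_right_cancel (h.trans (congrArg (· + 1) h2))

/-- Joining a subset of edges of `K` and one of `H` into a subset of edges of `G`. -/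
noncomputable def joinF (S₁ : Finset K.E) (S₂ : Finset H.E) : Finset G.E :=
  (S₁.disjSum S₂).map σ.edgeEquiv.symm.toEmbedding

lemma card_joinF (S₁ : Finset K.E) (S₂ : Finset H.E) :
    (σ.joinF S₁ S₂).card = S₁.card + S₂.card := by
  rw [joinF, Finset.card_map, Finset.card_disjSum]

/-- Subsets of the edges of `G` correspond to pairs of subsets for `K` and `H`. -/
noncomputable def finsetEquiv : Finset K.E × Finset H.E ≃ Finset G.E :=
  (⟨fun p => p.1.disjSum p.2, fun S => (S.toLeft, S.toRight),
    fun p => by simp, fun S => by simp [Finset.toLeft_disjSum_toRight]⟩ :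
      Finset K.E × Finset H.E ≃ Finset (K.E ⊕ H.E)).trans
    σ.edgeEquiv.symm.finsetCongr

lemma finsetEquiv_apply (S₁ : Finset K.E) (S₂ : Finset H.E) :
    σ.finsetEquiv (S₁, S₂) = σ.joinF S₁ S₂ := rfl

lemma mem_joinF_inl (S₁ : Finset K.E) (S₂ : Finset H.E) (a : K.E) :
    σ.edgeEquiv.symm (Sum.inl a) ∈ σ.joinF S₁ S₂ ↔ a ∈ S₁ := by
  rw [joinF, Finset.mem_map]
  constructor
  · rintro ⟨c, hc, hcx⟩
    have : c = Sum.inl a := σ.edgeEquiv.symm.injective hcx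
    subst this
    exact Finset.inl_mem_disjSum.mp hc
  · intro h
    exact ⟨Sum.inl a, Finset.inl_mem_disjSum.mpr h, rfl⟩

lemma mem_joinF_inr (S₁ : Finset K.E) (S₂ : Finset H.E) (b : H.E) :
    σ.edgeEquiv.symm (Sum.inr b) ∈ σ.joinF S₁ S₂ ↔ b ∈ S₂ := by
  rw [joinF, Finset.mem_map]
  constructor
  · rintro ⟨c, hc, hcx⟩
    have : c = Sum.inr b := σ.edgeEquiv.symm.injective hcx
    subst this
    exact Finset.inr_mem_disjSum.mp hc
  · intro h
    exact ⟨Sum.inr b, Finset.inr_mem_disjSum.mpr h, rfl⟩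

lemma joinF_univ : σ.joinF Finset.univ Finset.univ = Finset.univ := by
  refine Finset.eq_univ_iff_forall.mpr fun x => ?_
  have hx : x = σ.edgeEquiv.symm (σ.edgeEquiv x) := (Equiv.symm_apply_apply _ _).symm
  rw [hx]
  rcases hc : σ.edgeEquiv x with a | b
  · exact (σ.mem_joinF_inl _ _ a).mpr (Finset.mem_univ a)
  · exact (σ.mem_joinF_inr _ _ b).mpr (Finset.mem_univ b)

lemma rel_joinF (S₁ : Finset K.E) (S₂ : Finset H.E) :
    G.rel (σ.joinF S₁ S₂) = fun x y =>
      Relation.Map (K.rel S₁) σ.ιK σ.ιK x y ∨ Relation.Map (H.rel S₂) σ.ιH σ.ιH x y := by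
  funext x y
  simp only [Multigraph.rel, eq_iff_iff]
  constructor
  · rintro ⟨e, he, hends⟩
    rw [joinF, Finset.mem_map] at he
    obtain ⟨c, hc, rfl⟩ := he
    rcases c with a | b
    · left
      have hends' : (K.ends a).map σ.ιK = s(x, y) := by
        rw [← σ.endsK a]; exact hends
      rw [sym2_map_eq_iff] at hends'
      obtain ⟨v, w, hvw, hvx, hwy⟩ := hends'
      exact ⟨v, w, ⟨a, Finset.inl_mem_disjSum.mp hc, hvw⟩, hvx, hwy⟩
    · right
      have hends' : (H.ends b).map σ.ιH = s(x, y) := by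
        rw [← σ.endsH b]; exact hends
      rw [sym2_map_eq_iff] at hends'
      obtain ⟨v, w, hvw, hvx, hwy⟩ := hends'
      exact ⟨v, w, ⟨b, Finset.inr_mem_disjSum.mp hc, hvw⟩, hvx, hwy⟩
  · rintro (⟨v, w, ⟨a, ha, hvw⟩, hvx, hwy⟩ | ⟨v, w, ⟨b, hb, hvw⟩, hvx, hwy⟩)
    · refine ⟨σ.edgeEquiv.symm (Sum.inl a), (σ.mem_joinF_inl S₁ S₂ a).mpr ha, ?_⟩
      rw [σ.endsK a, sym2_map_eq_iff]
      exact ⟨v, w, hvw, hvx, hwy⟩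
    · refine ⟨σ.edgeEquiv.symm (Sum.inr b), (σ.mem_joinF_inr S₁ S₂ b).mpr hb, ?_⟩
      rw [σ.endsH b, sym2_map_eq_iff]
      exact ⟨v, w, hvw, hvx, hwy⟩

end NSum
namespace NSum

variable {G K H : Multigraph} {U : Set G.V} (σ : NSum G K H U)

/-- The canonical identification of `range ιK ∩ range ιH` with `U`. -/
noncomputable def ec : ↥(Set.range σ.ιK ∩ Set.range σ.ιH) ≃ ↥U := Equiv.setCongr σ.inter

lemma ofInj_eq_K (S₁ : Finset K.E) (u : ↥(Set.range σ.ιK ∩ Set.range σ.ιH)) :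
    (Equiv.ofInjective σ.ιK σ.injK).symm (incl1 _ _ u)
      = ((σ.eK.symm (σ.ec u)) : ↥(σ.ιK ⁻¹' U)).1 := by
  apply σ.injK
  have h1 : σ.ιK ((Equiv.ofInjective σ.ιK σ.injK).symm (incl1 _ _ u)) = u.1 :=
    Equiv.apply_ofInjective_symm σ.injK _
  have h2 : σ.ιK (((σ.eK.symm (σ.ec u)) : ↥(σ.ιK ⁻¹' U)).1) = (σ.ec u).1 := by
    have := σ.eK.apply_symm_apply (σ.ec u)
    exact congrArg Subtype.val this
  have h3 : ((σ.ec u : ↥U)).1 = u.1 := rfl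
  rw [h1, h2, h3]

lemma ofInj_eq_H (S₂ : Finset H.E) (u : ↥(Set.range σ.ιK ∩ Set.range σ.ιH)) :
    (Equiv.ofInjective σ.ιH σ.injH).symm (incl2 _ _ u)
      = ((σ.eH.symm (σ.ec u)) : ↥(σ.ιH ⁻¹' U)).1 := by
  apply σ.injH
  have h1 : σ.ιH ((Equiv.ofInjective σ.ιH σ.injH).symm (incl2 _ _ u)) = u.1 :=
    Equiv.apply_ofInjective_symm σ.injH _
  have h2 : σ.ιH (((σ.eH.symm (σ.ec u)) : ↥(σ.ιH ⁻¹' U)).1) = (σ.ec u).1 := by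
    have := σ.eH.apply_symm_apply (σ.ec u)
    exact congrArg Subtype.val this
  have h3 : ((σ.ec u : ↥U)).1 = u.1 := rfl
  rw [h1, h2, h3]

lemma comap_incl1_eq (S₁ : Finset K.E) :
    Setoid.comap (incl1 (Set.range σ.ιK) (Set.range σ.ιH))
        (setoidCongr (Equiv.ofInjective σ.ιK σ.injK).symm
          (Relation.EqvGen.setoid (K.rel S₁)))
      = setoidCongr σ.ec (σ.partKU S₁) := by
  refine Setoid.ext fun u w => ?_
  show Relation.EqvGen.setoid (K.rel S₁) ((Equiv.ofInjective σ.ιK σ.injK).symm (incl1 _ _ u))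
      ((Equiv.ofInjective σ.ιK σ.injK).symm (incl1 _ _ w))
    ↔ (σ.partKU S₁) (σ.ec u) (σ.ec w)
  rw [σ.ofInj_eq_K S₁ u, σ.ofInj_eq_K S₁ w]
  rfl

lemma comap_incl2_eq (S₂ : Finset H.E) :
    Setoid.comap (incl2 (Set.range σ.ιK) (Set.range σ.ιH))
        (setoidCongr (Equiv.ofInjective σ.ιH σ.injH).symm
          (Relation.EqvGen.setoid (H.rel S₂)))
      = setoidCongr σ.ec (σ.partHU S₂) := by
  refine Setoid.ext fun u w => ?_
  show Relation.EqvGen.setoid (H.rel S₂) ((Equiv.ofInjective σ.ιH σ.injH).symm (incl2 _ _ u))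
      ((Equiv.ofInjective σ.ιH σ.injH).symm (incl2 _ _ w))
    ↔ (σ.partHU S₂) (σ.ec u) (σ.ec w)
  rw [σ.ofInj_eq_H S₂ u, σ.ofInj_eq_H S₂ w]
  rfl

lemma omega_joinF (S₁ : Finset K.E) (S₂ : Finset H.E) :
    G.omega (σ.joinF S₁ S₂) + nblocks (σ.partKU S₁) + nblocks (σ.partHU S₂)
      = K.omega S₁ + H.omega S₂ + nblocks (σ.partKU S₁ ⊔ σ.partHU S₂) := by
  set T₁ := setoidCongr (Equiv.ofInjective σ.ιK σ.injK).symm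
    (Relation.EqvGen.setoid (K.rel S₁)) with hT₁
  set T₂ := setoidCongr (Equiv.ofInjective σ.ιH σ.injH).symm
    (Relation.EqvGen.setoid (H.rel S₂)) with hT₂
  have hs : Relation.EqvGen.setoid (G.rel (σ.joinF S₁ S₂))
      = extendSetoid (Set.range σ.ιK) T₁ ⊔ extendSetoid (Set.range σ.ιH) T₂ := by
    rw [σ.rel_joinF S₁ S₂, eqvGen_or, eqvGen_map_injective σ.ιK σ.injK,
      eqvGen_map_injective σ.ιH σ.injH]
  have hcard := card_quotient_sup_extend_extend (Set.range σ.ιK) (Set.range σ.ιH)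
    σ.cover T₁ T₂
  have c0 : G.omega (σ.joinF S₁ S₂)
      = Nat.card (Quotient (extendSetoid (Set.range σ.ιK) T₁ ⊔
          extendSetoid (Set.range σ.ιH) T₂)) := by
    unfold Multigraph.omega
    rw [hs]
  have c1 : Nat.card (Quotient T₁) = K.omega S₁ := nblocks_setoidCongr _ _
  have c2 : Nat.card (Quotient T₂) = H.omega S₂ := nblocks_setoidCongr _ _
  have c3 : Nat.card (Quotient (Setoid.comap (incl1 (Set.range σ.ιK) (Set.range σ.ιH)) T₁))
      = nblocks (σ.partKU S₁) := by
    rw [σ.comap_incl1_eq S₁]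
    exact nblocks_setoidCongr _ _
  have c4 : Nat.card (Quotient (Setoid.comap (incl2 (Set.range σ.ιK) (Set.range σ.ιH)) T₂))
      = nblocks (σ.partHU S₂) := by
    rw [σ.comap_incl2_eq S₂]
    exact nblocks_setoidCongr _ _
  have c5 : Nat.card (Quotient (ml2C (Set.range σ.ιK) (Set.range σ.ιH) T₁ T₂))
      = nblocks (σ.partKU S₁ ⊔ σ.partHU S₂) := by
    show Nat.card (Quotient (Setoid.comap (incl1 _ _) T₁ ⊔ Setoid.comap (incl2 _ _) T₂)) = _
    rw [σ.comap_incl1_eq S₁, σ.comap_incl2_eq S₂, ← setoidCongr_sup]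
    exact nblocks_setoidCongr _ _
  omega

include σ in
lemma card_V_nsum :
    Fintype.card G.V + Nat.card ↥U = Fintype.card K.V + Fintype.card H.V := by
  have h := Set.ncard_union_add_ncard_inter (Set.range σ.ιK) (Set.range σ.ιH)
    (Set.toFinite _) (Set.toFinite _)
  rw [σ.cover, σ.inter, Set.ncard_univ] at h
  have h1 : U.ncard = Nat.card ↥U := (Nat.card_coe_set_eq U).symm
  have h2 : (Set.range σ.ιK).ncard = Fintype.card K.V := by
    rw [← Nat.card_coe_set_eq, Nat.card_range_of_injective σ.injK,
      Nat.card_eq_fintype_card]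
  have h3 : (Set.range σ.ιH).ncard = Fintype.card H.V := by
    rw [← Nat.card_coe_set_eq, Nat.card_range_of_injective σ.injH,
      Nat.card_eq_fintype_card]
  rw [← Nat.card_eq_fintype_card (α := G.V)]
  omega

include σ in
lemma omegaG_G (hK : K.omegaG = 1) (hH : H.omegaG = 1) (hne : Nonempty ↥U) :
    G.omegaG = 1 := by
  have h := σ.omega_joinF Finset.univ Finset.univ
  rw [σ.joinF_univ, σ.partKU_univ hK, σ.partHU_univ hH, top_sup_eq, nblocks_top] at h
  have h1 : K.omega Finset.univ = 1 := hK
  have h2 : H.omega Finset.univ = 1 := hH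
  show G.omega Finset.univ = 1
  omega

end NSum
section Mobius

/-- The Möbius value `μ(C, ⊤) = (-1)^(k-1) (k-1)!` for a partition with `k` blocks. -/
noncomputable def mval (k : ℕ) : ℝ := (-1) ^ (k - 1) * ((k - 1).factorial : ℝ)

lemma mval_ne_zero (k : ℕ) : mval k ≠ 0 := by
  unfold mval
  refine mul_ne_zero (pow_ne_zero _ (by norm_num)) ?_
  exact_mod_cast (k - 1).factorial_ne_zero

/-- Functions with a given kernel correspond to embeddings of the quotient. -/
noncomputable def kerFiberEquiv {β : Type} (q : ℕ) (C : Setoid β) :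
    {f : β → Fin q // Setoid.ker f = C} ≃ (Quotient C ↪ Fin q) where
  toFun fh := ⟨Quotient.lift fh.1 (fun a b h => by
      have h' : Setoid.ker fh.1 a b := by rw [fh.2]; exact h
      exact h'), by
    refine Quotient.ind fun a => Quotient.ind fun b => ?_
    intro h
    refine Quotient.sound ?_
    rw [← fh.2]
    exact h⟩
  invFun g := ⟨fun b => g (Quotient.mk C b), by
    refine Setoid.ext fun a b => ?_
    show g (Quotient.mk C a) = g (Quotient.mk C b) ↔ C a b
    rw [g.injective.eq_iff]
    exact ⟨Quotient.exact, Quotient.sound⟩⟩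
  left_inv fh := Subtype.ext (funext fun b => rfl)
  right_inv g := by
    refine DFunLike.ext _ _ ?_
    refine Quotient.ind fun b => ?_
    rfl

lemma card_fun_eq (β : Type) [Fintype β] (q : ℕ) :
    q ^ (Fintype.card β) = ∑ C : Setoid β, Nat.descFactorial q (nblocks C) := by
  classical
  have e1 : (Σ C : Setoid β, {f : β → Fin q // Setoid.ker f = C}) ≃ (β → Fin q) :=
    Equiv.sigmaFiberEquiv _
  have h1 : Fintype.card (Σ C : Setoid β, {f : β → Fin q // Setoid.ker f = C})
      = Fintype.card (β → Fin q) := Fintype.card_congr e1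
  rw [Fintype.card_sigma, Fintype.card_fun, Fintype.card_fin] at h1
  rw [← h1]
  refine Finset.sum_congr rfl fun C _ => ?_
  letI : Fintype (Quotient C) := Fintype.ofFinite _
  rw [Fintype.card_congr (kerFiberEquiv q C)]
  rw [Fintype.card_embedding_eq, Fintype.card_fin]
  congr 1
  rw [nblocks, Nat.card_eq_fintype_card]

lemma cast_descFactorial (q k : ℕ) :
    ((Nat.descFactorial q k : ℕ) : ℝ) = ∏ i ∈ Finset.range k, ((q : ℝ) - i) := by
  induction k with
  | zero => simp
  | succ k ih =>
    by_cases h : q ≤ k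
    · have h0 : Nat.descFactorial q (k + 1) = 0 :=
        Nat.descFactorial_eq_zero_iff_lt.mpr (by omega)
      rw [h0]
      have : ((q : ℝ) - q) = 0 := sub_self _
      rw [Finset.prod_eq_zero (Finset.mem_range.mpr (by omega)) this]
      simp
    · push_neg at h
      rw [Nat.descFactorial_succ, Nat.cast_mul, ih, Finset.prod_range_succ,
        Nat.cast_sub (le_of_lt h)]
      ring

lemma prod_neg_factorial (r : ℕ) :
    ∏ i ∈ Finset.range r, ((0 : ℝ) - ((i : ℝ) + 1)) = (-1) ^ r * (r.factorial : ℝ) := by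
  have h : ∀ i ∈ Finset.range r, (0 : ℝ) - ((i : ℝ) + 1) = (-1) * ((i : ℝ) + 1) := by
    intro i _; ring
  rw [Finset.prod_congr rfl h, Finset.prod_mul_distrib, Finset.prod_const,
    Finset.card_range]
  congr 1
  have : ∀ i ∈ Finset.range r, ((i : ℝ) + 1) = (((i + 1 : ℕ) : ℕ) : ℝ) := by
    intro i _; push_cast; ring
  rw [Finset.prod_congr rfl this, ← Nat.cast_prod, Finset.prod_range_add_one_eq_factorial]

lemma mobius_sum (β : Type) [Fintype β] [Nonempty β] :
    ∑ C : Setoid β, mval (nblocks C) = if Fintype.card β = 1 then 1 else 0 := by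
  classical
  have hm1 : 1 ≤ Fintype.card β := Fintype.card_pos
  have hnb : ∀ C : Setoid β, 1 ≤ nblocks C := fun C => nblocks_pos C
  set p : Polynomial ℝ := ∑ C : Setoid β,
    ∏ i ∈ Finset.range (nblocks C - 1), (Polynomial.X - Polynomial.C ((i : ℝ) + 1)) with hp
  have key : Polynomial.X * p = Polynomial.X ^ (Fintype.card β) := by
    apply Polynomial.eq_of_infinite_eval_eq
    apply Set.infinite_of_injective_forall_mem (f := fun q : ℕ => (q : ℝ))
      Nat.cast_injective
    intro q
    show Polynomial.eval _ _ = Polynomial.eval _ _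
    rw [Polynomial.eval_mul, Polynomial.eval_X, Polynomial.eval_pow, Polynomial.eval_X,
      hp, Polynomial.eval_finset_sum, Finset.mul_sum]
    have hterm : ∀ C : Setoid β,
        (q : ℝ) * Polynomial.eval (q : ℝ)
          (∏ i ∈ Finset.range (nblocks C - 1), (Polynomial.X - Polynomial.C ((i : ℝ) + 1)))
        = ((Nat.descFactorial q (nblocks C) : ℕ) : ℝ) := by
      intro C
      rw [Polynomial.eval_prod]
      simp only [Polynomial.eval_sub, Polynomial.eval_X, Polynomial.eval_C]
      rw [cast_descFactorial]
      obtain ⟨r, hr⟩ : ∃ r, nblocks C = r + 1 := ⟨nblocks C - 1, by have := hnb C; omega⟩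
      rw [hr, Finset.prod_range_succ']
      have h1 : ∀ i ∈ Finset.range r, (q : ℝ) - ((i + 1 : ℕ) : ℝ) = (q : ℝ) - ((i : ℝ) + 1) := by
        intro i _; push_cast; ring
      rw [Finset.prod_congr rfl h1]
      have h2 : (r + 1 - 1) = r := by omega
      rw [h2]
      push_cast
      ring
    rw [Finset.sum_congr rfl (fun C _ => hterm C)]
    rw [← Nat.cast_sum]
    rw [← card_fun_eq β q]
    push_cast
    ring
  have hXne : (Polynomial.X : Polynomial ℝ) ≠ 0 := Polynomial.X_ne_zero
  have hpow : (Polynomial.X : Polynomial ℝ) ^ (Fintype.card β)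
      = Polynomial.X * Polynomial.X ^ (Fintype.card β - 1) := by
    conv_lhs => rw [show Fintype.card β = (Fintype.card β - 1) + 1 from by omega]
    rw [pow_succ']
  have hpX : p = Polynomial.X ^ (Fintype.card β - 1) :=
    mul_left_cancel₀ hXne (key.trans hpow)
  have heval := congrArg (Polynomial.eval (0 : ℝ)) hpX
  rw [hp, Polynomial.eval_finset_sum, Polynomial.eval_pow, Polynomial.eval_X] at heval
  have hterm0 : ∀ C : Setoid β,
      Polynomial.eval 0 (∏ i ∈ Finset.range (nblocks C - 1),
        (Polynomial.X - Polynomial.C ((i : ℝ) + 1))) = mval (nblocks C) := by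
    intro C
    rw [Polynomial.eval_prod]
    simp only [Polynomial.eval_sub, Polynomial.eval_X, Polynomial.eval_C]
    rw [prod_neg_factorial]
    rfl
  rw [Finset.sum_congr rfl (fun C _ => hterm0 C)] at heval
  rw [heval, zero_pow_eq]
  by_cases h : Fintype.card β = 1
  · rw [if_pos h, if_pos (by omega)]
  · rw [if_neg h, if_neg (by omega)]

lemma nblocks_comap_surjective {α β : Type} (f : α → β) (hf : Function.Surjective f)
    (r : Setoid β) : nblocks (Setoid.comap f r) = nblocks r := by
  have e := Setoid.comapQuotientEquiv f r
  have hsurj : Function.Surjective (Quotient.mk'' (s₁ := r) ∘ f) := by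
    intro q
    obtain ⟨b, hb⟩ := Quotient.exists_rep q
    obtain ⟨a, ha⟩ := hf b
    exact ⟨a, by simp only [Function.comp_apply, ha]; exact hb⟩
  have hr : Set.range (Quotient.mk'' (s₁ := r) ∘ f) = Set.univ := Set.range_eq_univ.mpr hsurj
  unfold nblocks
  rw [Nat.card_congr (e.trans ((Equiv.setCongr hr).trans (Equiv.Set.univ _)))]

lemma mobius_corr {α : Type} [Finite α] [Nonempty α] (D : Setoid α) :
    ∑ C : Setoid α, (if D ≤ C then mval (nblocks C) else 0)
      = if nblocks D = 1 then 1 else 0 := by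
  classical
  rw [← Finset.sum_filter]
  rw [Finset.sum_subtype (p := fun C => D ≤ C) (Finset.univ.filter fun C => D ≤ C)
    (fun x => by simp) (fun C => mval (nblocks C))]
  let e : Setoid (Quotient D) ≃ {C : Setoid α // D ≤ C} :=
    (Setoid.correspondence D).symm.toEquiv
  rw [← Equiv.sum_comp e (fun a => mval (nblocks a.1))]
  have hval : ∀ C' : Setoid (Quotient D), nblocks ((e C').1) = nblocks C' := by
    intro C'
    have h1 : ((e C').1 : Setoid α) = Setoid.comap Quotient.mk' C' := rfl
    rw [h1]
    exact nblocks_comap_surjective _ (fun q => Quotient.exists_rep q) C'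
  rw [Finset.sum_congr rfl (fun C' _ => by rw [hval C'])]
  letI : Fintype (Quotient D) := Fintype.ofFinite _
  haveI : Nonempty (Quotient D) := ⟨Quotient.mk _ (Classical.arbitrary _)⟩
  rw [mobius_sum (Quotient D)]
  congr 1
  rw [nblocks, Nat.card_eq_fintype_card]

end Mobius
section MatrixFacts

open Matrix

variable (α : Type) [Finite α]

/-- The zeta matrix of the partition lattice. -/
noncomputable def Zmat : Matrix (Setoid α) (Setoid α) ℝ :=
  Matrix.of fun A C => if A ≤ C then 1 else 0

/-- The diagonal Möbius matrix. -/
noncomputable def Dmat : Matrix (Setoid α) (Setoid α) ℝ :=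
  Matrix.diagonal fun C => mval (nblocks C)

lemma Amat_factor [Nonempty α] : Amat α = Zmat α * Dmat α * (Zmat α)ᵀ := by
  ext A B
  rw [Matrix.mul_apply]
  simp only [Dmat, Matrix.mul_diagonal, Matrix.transpose_apply]
  have hterm : ∀ C : Setoid α, Zmat α A C * mval (nblocks C) * Zmat α B C
      = if (A ⊔ B) ≤ C then mval (nblocks C) else 0 := by
    intro C
    show (if A ≤ C then (1:ℝ) else 0) * mval (nblocks C) * (if B ≤ C then (1:ℝ) else 0) = _
    by_cases h1 : A ≤ C <;> by_cases h2 : B ≤ C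
    · rw [if_pos h1, if_pos h2, if_pos (sup_le h1 h2)]; ring
    · rw [if_pos h1, if_neg h2, if_neg (fun hc => h2 (le_trans le_sup_right hc))]; ring
    · rw [if_neg h1, if_pos h2, if_neg (fun hc => h1 (le_trans le_sup_left hc))]; ring
    · rw [if_neg h1, if_neg h2, if_neg (fun hc => h1 (le_trans le_sup_left hc))]; ring
  rw [Finset.sum_congr rfl (fun C _ => hterm C)]
  rw [mobius_corr (A ⊔ B)]
  rfl

lemma isUnit_det_Zmat : IsUnit (Zmat α).det := by
  classical
  let e : Setoid α ≃ LinearExtension (Setoid α) :=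
    ⟨fun x => toLinearExtension x, fun y => y, fun _ => rfl, fun _ => rfl⟩
  letI : Fintype (LinearExtension (Setoid α)) := Fintype.ofEquiv _ e
  have hdet : ((Zmat α).submatrix e.symm e.symm).det = (Zmat α).det :=
    Matrix.det_submatrix_equiv_self e.symm (Zmat α)
  have htri : ((Zmat α).submatrix e.symm e.symm).BlockTriangular id := by
    intro i j hij
    show Zmat α (e.symm i) (e.symm j) = 0
    show (if (e.symm i) ≤ (e.symm j) then (1:ℝ) else 0) = 0
    rw [if_neg]
    intro hle
    have hmono := toLinearExtension.monotone hle
    exact absurd (show i ≤ j from hmono) (not_le.mpr hij)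
  have hdiag := Matrix.det_of_upperTriangular htri
  rw [hdet] at hdiag
  rw [hdiag]
  have h1 : ∀ i, ((Zmat α).submatrix e.symm e.symm) i i = 1 := by
    intro i
    show (if (e.symm i) ≤ (e.symm i) then (1:ℝ) else 0) = 1
    rw [if_pos le_rfl]
  rw [Finset.prod_congr rfl (fun i _ => h1 i), Finset.prod_const_one]
  exact isUnit_one

lemma isUnit_Amat [Nonempty α] : IsUnit (Amat α) := by
  classical
  rw [Matrix.isUnit_iff_isUnit_det, Amat_factor α, Matrix.det_mul, Matrix.det_mul,
    Matrix.det_transpose]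
  refine ((isUnit_det_Zmat α).mul ?_).mul (isUnit_det_Zmat α)
  rw [Dmat, Matrix.det_diagonal]
  exact isUnit_iff_ne_zero.mpr (Finset.prod_ne_zero_iff.mpr fun C _ => mval_ne_zero _)

lemma Amat_symm : (Amat α)ᵀ = Amat α := by
  ext A B
  show (if nblocks (B ⊔ A) = 1 then (1:ℝ) else 0) = if nblocks (A ⊔ B) = 1 then 1 else 0
  rw [sup_comm]

lemma Amat_comm (P Q : Setoid α) : Amat α P Q = Amat α Q P := by
  show (if nblocks (P ⊔ Q) = 1 then (1:ℝ) else 0) = if nblocks (Q ⊔ P) = 1 then 1 else 0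
  rw [sup_comm]

lemma amat_pairing [Nonempty α] (u v : Setoid α → ℝ) :
    ∑ A : Setoid α, ∑ B : Setoid α,
        (Amat α)⁻¹ A B * ((Amat α).mulVec u A) * ((Amat α).mulVec v B)
      = ∑ A : Setoid α, ∑ B : Setoid α, Amat α A B * u A * v B := by
  classical
  have hdet : IsUnit (Amat α).det := (Matrix.isUnit_iff_isUnit_det _).mp (isUnit_Amat α)
  have expand : ∀ (M : Matrix (Setoid α) (Setoid α) ℝ) (w : Setoid α → ℝ) (A : Setoid α),
      M.mulVec w A = ∑ B : Setoid α, M A B * w B := fun M w A => rfl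
  have step1 : ∑ A : Setoid α, ∑ B : Setoid α,
      (Amat α)⁻¹ A B * ((Amat α).mulVec u A) * ((Amat α).mulVec v B)
      = ∑ A : Setoid α,
          (Amat α).mulVec u A * ((Amat α)⁻¹.mulVec ((Amat α).mulVec v) A) := by
    refine Finset.sum_congr rfl fun A _ => ?_
    rw [expand ((Amat α)⁻¹) ((Amat α).mulVec v) A, Finset.mul_sum]
    exact Finset.sum_congr rfl fun B _ => by ring
  rw [step1, Matrix.mulVec_mulVec, Matrix.nonsing_inv_mul _ hdet, Matrix.one_mulVec]
  have step2 : ∑ A : Setoid α, (Amat α).mulVec u A * v A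
      = ∑ A : Setoid α, ∑ B : Setoid α, Amat α A B * u B * v A := by
    refine Finset.sum_congr rfl fun A _ => ?_
    rw [expand, Finset.sum_mul]
  rw [step2, Finset.sum_comm]
  refine Finset.sum_congr rfl fun A _ => Finset.sum_congr rfl fun B _ => ?_
  rw [Amat_comm α B A]

end MatrixFacts
section TutteSide

lemma tutte_x_one (M : Multigraph) (hM : M.omegaG = 1) (hne : Nonempty M.V) (y : ℝ) :
    M.tutte 1 y = ∑ S : Finset M.E,
      if M.omega S = 1 then (y - 1) ^ (1 + S.card - Fintype.card M.V) else 0 := by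
  unfold Multigraph.tutte
  rw [hM]
  refine Finset.sum_congr rfl fun S _ => ?_
  have h1 : 1 ≤ M.omega S := by
    have : Nonempty (Quotient (Relation.EqvGen.setoid (M.rel S))) :=
      ⟨Quotient.mk _ (Classical.arbitrary _)⟩
    exact Nat.card_pos
  rw [sub_self, zero_pow_eq]
  by_cases h : M.omega S = 1
  · rw [if_pos (by omega), if_pos h, one_mul, h]
  · rw [if_neg (by omega), if_neg h, zero_mul]

lemma pow_sub_to_zpow {ε : ℝ} (hε : ε ≠ 0) {a b : ℕ} (h : b ≤ a) :
    ε ^ (a - b) = ε ^ ((a : ℤ) - (b : ℤ)) := by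
  rw [← Nat.cast_sub h, zpow_natCast]

lemma sumCollapseAux {ι P : Type} [Fintype ι] [Fintype P] (h : ι → P) (φ : P → ℝ) (F : ι → ℝ) :
    ∑ A : P, φ A * ∑ i : ι, (if h i = A then F i else 0)
      = ∑ i : ι, φ (h i) * F i := by
  classical
  have key : ∀ A, φ A * ∑ i : ι, (if h i = A then F i else 0)
      = ∑ i : ι, (if h i = A then φ (h i) * F i else 0) := by
    intro A
    rw [Finset.mul_sum]
    refine Finset.sum_congr rfl fun i _ => ?_
    by_cases hi : h i = A
    · rw [if_pos hi, if_pos hi, hi]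
    · rw [if_neg hi, if_neg hi, mul_zero]
  rw [Finset.sum_congr rfl fun A _ => key A, Finset.sum_comm]
  refine Finset.sum_congr rfl fun i _ => ?_
  rw [Finset.sum_ite_eq Finset.univ (h i) (fun _ => φ (h i) * F i),
    if_pos (Finset.mem_univ _)]

namespace NSum

variable {G K H : Multigraph} {U : Set G.V}

/-- The vector of `x = 1` auxiliary Tutte sums for `K`. -/
noncomputable def uvecK (σ : NSum G K H U) (y : ℝ) : Setoid ↥U → ℝ := fun C =>
  ∑ S : Finset K.E, if σ.partKU S = C ∧ K.omega S = nblocks C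
    then (y - 1) ^ ((S.card : ℤ) - (Fintype.card K.V : ℤ)) else 0

/-- The vector of `x = 1` auxiliary Tutte sums for `H`. -/
noncomputable def uvecH (σ : NSum G K H U) (y : ℝ) : Setoid ↥U → ℝ := fun C =>
  ∑ S : Finset H.E, if σ.partHU S = C ∧ H.omega S = nblocks C
    then (y - 1) ^ ((S.card : ℤ) - (Fintype.card H.V : ℤ)) else 0

variable (σ : NSum G K H U)

lemma nblocks_partKU_le (S : Finset K.E) : nblocks (σ.partKU S) ≤ K.omega S := by
  rw [show nblocks (σ.partKU S) = nblocks (K.part (σ.ιK ⁻¹' U) S) from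
    nblocks_setoidCongr _ _]
  exact K.nblocks_part_le _ S

lemma nblocks_partHU_le (S : Finset H.E) : nblocks (σ.partHU S) ≤ H.omega S := by
  rw [show nblocks (σ.partHU S) = nblocks (H.part (σ.ιH ⁻¹' U) S) from
    nblocks_setoidCongr _ _]
  exact H.nblocks_part_le _ S

lemma tutte_contractK (A : Setoid ↥U) (hK : K.omegaG = 1)
    (hne : Nonempty ↥U) (y : ℝ) (hy : y ≠ 1) :
    (σ.contractK A).tutte 1 y
      = (y - 1) ^ ((Nat.card ↥U : ℤ) + 1 - (nblocks A : ℤ))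
        * ∑ C : Setoid ↥U, Amat ↥U A C * σ.uvecK y C := by
  classical
  have hε : y - 1 ≠ 0 := sub_ne_zero.mpr hy
  haveI hKV : Nonempty K.V := ⟨(σ.eK.symm (Classical.arbitrary ↥U)).1⟩
  haveI hVne : Nonempty (σ.contractK A).V :=
    ⟨Quotient.mk (extendSetoid (σ.ιK ⁻¹' U) (σ.pullK A)) (Classical.arbitrary K.V)⟩
  rw [tutte_x_one _ (σ.omegaG_contractK A hK hne) hVne y]
  have hRHS : ∑ C : Setoid ↥U, Amat ↥U A C * σ.uvecK y C
      = ∑ S : Finset K.E,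
          (if K.omega S = nblocks (σ.partKU S) ∧ nblocks (A ⊔ σ.partKU S) = 1
            then (y - 1) ^ ((S.card : ℤ) - (Fintype.card K.V : ℤ)) else 0) := by
    have huv : ∀ C, σ.uvecK y C = ∑ S : Finset K.E,
        (if σ.partKU S = C then
          (if K.omega S = nblocks (σ.partKU S)
            then (y - 1) ^ ((S.card : ℤ) - (Fintype.card K.V : ℤ)) else 0) else 0) := by
      intro C
      unfold uvecK
      refine Finset.sum_congr rfl fun S _ => ?_
      by_cases h1 : σ.partKU S = C
      · subst h1; simp
      · rw [if_neg (fun hc => h1 hc.1), if_neg h1]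
    rw [Finset.sum_congr rfl fun C _ => by rw [huv C]]
    rw [sumCollapseAux (fun S : Finset K.E => σ.partKU S) (fun C => Amat ↥U A C) _]
    refine Finset.sum_congr rfl fun S _ => ?_
    show (if nblocks (A ⊔ σ.partKU S) = 1 then (1:ℝ) else 0) * _ = _
    by_cases h2 : nblocks (A ⊔ σ.partKU S) = 1
    · rw [if_pos h2]
      by_cases h3 : K.omega S = nblocks (σ.partKU S)
      · rw [if_pos h3, if_pos ⟨h3, h2⟩, one_mul]
      · rw [if_neg h3, if_neg (fun hc => h3 hc.1), mul_zero]
    · rw [if_neg h2, zero_mul, if_neg (fun hc : _ ∧ _ => h2 hc.2)]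
  rw [hRHS, Finset.mul_sum]
  refine Finset.sum_congr rfl fun S _ => ?_
  have heq := σ.omega_contractK A S
  rw [sup_comm (σ.partKU S) A] at heq
  have hb1 := σ.nblocks_partKU_le S
  have hb2 : 1 ≤ nblocks (A ⊔ σ.partKU S) := nblocks_pos _
  haveI : Nonempty (σ.contractK A).V := hVne
  have hb0 : 1 ≤ (σ.contractK A).omega S := by
    have : Nonempty (Quotient (Relation.EqvGen.setoid ((σ.contractK A).rel S))) :=
      ⟨Quotient.mk _ (Classical.arbitrary _)⟩
    exact Nat.card_pos
  have hcond : ((σ.contractK A).omega S = 1)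
      ↔ (K.omega S = nblocks (σ.partKU S) ∧ nblocks (A ⊔ σ.partKU S) = 1) := by
    constructor
    · intro h; constructor <;> omega
    · intro h; omega
  by_cases h : (σ.contractK A).omega S = 1
  · rw [if_pos h, if_pos (hcond.mp h)]
    have hle : Fintype.card (σ.contractK A).V ≤ 1 + S.card := by
      have h2 := (σ.contractK A).card_V_le_omega_add_card S
      omega
    rw [pow_sub_to_zpow hε hle, ← zpow_add₀ hε]
    congr 1
    have hcV := σ.card_contractK_V A
    have hSc : @Finset.card (σ.contractK A).E S = @Finset.card K.E S := rfl
    omega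
  · rw [if_neg h, if_neg (fun hc => h (hcond.mpr hc)), mul_zero]

lemma tutte_contractH (B : Setoid ↥U) (hH : H.omegaG = 1)
    (hne : Nonempty ↥U) (y : ℝ) (hy : y ≠ 1) :
    (σ.contractH B).tutte 1 y
      = (y - 1) ^ ((Nat.card ↥U : ℤ) + 1 - (nblocks B : ℤ))
        * ∑ C : Setoid ↥U, Amat ↥U B C * σ.uvecH y C := by
  classical
  have hε : y - 1 ≠ 0 := sub_ne_zero.mpr hy
  haveI hHV : Nonempty H.V := ⟨(σ.eH.symm (Classical.arbitrary ↥U)).1⟩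
  haveI hVne : Nonempty (σ.contractH B).V :=
    ⟨Quotient.mk (extendSetoid (σ.ιH ⁻¹' U) (σ.pullH B)) (Classical.arbitrary H.V)⟩
  rw [tutte_x_one _ (σ.omegaG_contractH B hH hne) hVne y]
  have hRHS : ∑ C : Setoid ↥U, Amat ↥U B C * σ.uvecH y C
      = ∑ S : Finset H.E,
          (if H.omega S = nblocks (σ.partHU S) ∧ nblocks (B ⊔ σ.partHU S) = 1
            then (y - 1) ^ ((S.card : ℤ) - (Fintype.card H.V : ℤ)) else 0) := by
    have huv : ∀ C, σ.uvecH y C = ∑ S : Finset H.E,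
        (if σ.partHU S = C then
          (if H.omega S = nblocks (σ.partHU S)
            then (y - 1) ^ ((S.card : ℤ) - (Fintype.card H.V : ℤ)) else 0) else 0) := by
      intro C
      unfold uvecH
      refine Finset.sum_congr rfl fun S _ => ?_
      by_cases h1 : σ.partHU S = C
      · subst h1; simp
      · rw [if_neg (fun hc => h1 hc.1), if_neg h1]
    rw [Finset.sum_congr rfl fun C _ => by rw [huv C]]
    rw [sumCollapseAux (fun S : Finset H.E => σ.partHU S) (fun C => Amat ↥U B C) _]
    refine Finset.sum_congr rfl fun S _ => ?_
    show (if nblocks (B ⊔ σ.partHU S) = 1 then (1:ℝ) else 0) * _ = _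
    by_cases h2 : nblocks (B ⊔ σ.partHU S) = 1
    · rw [if_pos h2]
      by_cases h3 : H.omega S = nblocks (σ.partHU S)
      · rw [if_pos h3, if_pos ⟨h3, h2⟩, one_mul]
      · rw [if_neg h3, if_neg (fun hc => h3 hc.1), mul_zero]
    · rw [if_neg h2, zero_mul, if_neg (fun hc : _ ∧ _ => h2 hc.2)]
  rw [hRHS, Finset.mul_sum]
  refine Finset.sum_congr rfl fun S _ => ?_
  have heq := σ.omega_contractH B S
  rw [sup_comm (σ.partHU S) B] at heq
  have hb1 := σ.nblocks_partHU_le S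
  have hb2 : 1 ≤ nblocks (B ⊔ σ.partHU S) := nblocks_pos _
  have hb0 : 1 ≤ (σ.contractH B).omega S := by
    have : Nonempty (Quotient (Relation.EqvGen.setoid ((σ.contractH B).rel S))) :=
      ⟨Quotient.mk _ (Classical.arbitrary _)⟩
    exact Nat.card_pos
  have hcond : ((σ.contractH B).omega S = 1)
      ↔ (H.omega S = nblocks (σ.partHU S) ∧ nblocks (B ⊔ σ.partHU S) = 1) := by
    constructor
    · intro h; constructor <;> omega
    · intro h; omega
  by_cases h : (σ.contractH B).omega S = 1
  · rw [if_pos h, if_pos (hcond.mp h)]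
    have hle : Fintype.card (σ.contractH B).V ≤ 1 + S.card := by
      have h2 := (σ.contractH B).card_V_le_omega_add_card S
      omega
    rw [pow_sub_to_zpow hε hle, ← zpow_add₀ hε]
    congr 1
    have hcV := σ.card_contractH_V B
    have hSc : @Finset.card (σ.contractH B).E S = @Finset.card H.E S := rfl
    omega
  · rw [if_neg h, if_neg (fun hc => h (hcond.mpr hc)), mul_zero]

end NSum

end TutteSide
namespace NSum

variable {G K H : Multigraph} {U : Set G.V}

/-- The pair of partitions induced by a pair of edge subsets. -/
noncomputable def pairMap (σ : NSum G K H U) :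
    Finset K.E × Finset H.E → Setoid ↥U × Setoid ↥U :=
  fun p => (σ.partKU p.1, σ.partHU p.2)

/-- The weight of a pair of edge subsets. -/
noncomputable def Fpair (σ : NSum G K H U) (y : ℝ) : Finset K.E × Finset H.E → ℝ :=
  fun p =>
    if K.omega p.1 = nblocks (σ.partKU p.1) ∧ H.omega p.2 = nblocks (σ.partHU p.2)
      then (y - 1) ^ ((p.1.card : ℤ) - (Fintype.card K.V : ℤ))
        * (y - 1) ^ ((p.2.card : ℤ) - (Fintype.card H.V : ℤ))
      else 0

variable (σ : NSum G K H U)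

lemma tutte_G (hK : K.omegaG = 1) (hH : H.omegaG = 1) (hne : Nonempty ↥U)
    (y : ℝ) (hy : y ≠ 1) :
    G.tutte 1 y = (y - 1) ^ ((Nat.card ↥U : ℤ) + 1)
      * ∑ A : Setoid ↥U, ∑ B : Setoid ↥U,
          Amat ↥U A B * σ.uvecK y A * σ.uvecH y B := by
  classical
  have hε : y - 1 ≠ 0 := sub_ne_zero.mpr hy
  haveI hGV : Nonempty G.V := ⟨(Classical.arbitrary ↥U).1⟩
  rw [tutte_x_one G (σ.omegaG_G hK hH hne) hGV y,
    ← Equiv.sum_comp σ.finsetEquiv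
      (fun S : Finset G.E =>
        if G.omega S = 1 then (y - 1) ^ (1 + S.card - Fintype.card G.V) else 0),
    Fintype.sum_prod_type]
  have hper : ∀ (S₁ : Finset K.E) (S₂ : Finset H.E),
      (if G.omega (σ.finsetEquiv (S₁, S₂)) = 1
        then (y - 1) ^ (1 + (σ.finsetEquiv (S₁, S₂)).card - Fintype.card G.V) else 0)
      = (y - 1) ^ ((Nat.card ↥U : ℤ) + 1) *
          (Amat ↥U (σ.partKU S₁) (σ.partHU S₂) * σ.Fpair y (S₁, S₂)) := by
    intro S₁ S₂
    rw [σ.finsetEquiv_apply]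
    show _ = (y - 1) ^ ((Nat.card ↥U : ℤ) + 1) *
      ((if nblocks (σ.partKU S₁ ⊔ σ.partHU S₂) = 1 then (1:ℝ) else 0) *
        (if K.omega S₁ = nblocks (σ.partKU S₁) ∧ H.omega S₂ = nblocks (σ.partHU S₂)
          then (y - 1) ^ ((S₁.card : ℤ) - (Fintype.card K.V : ℤ))
            * (y - 1) ^ ((S₂.card : ℤ) - (Fintype.card H.V : ℤ))
          else 0))
    have hb1 := σ.nblocks_partKU_le S₁
    have hb2 := σ.nblocks_partHU_le S₂
    have hb3 : 1 ≤ nblocks (σ.partKU S₁ ⊔ σ.partHU S₂) := nblocks_pos _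
    have hb0 : 1 ≤ G.omega (σ.joinF S₁ S₂) := by
      have : Nonempty (Quotient (Relation.EqvGen.setoid (G.rel (σ.joinF S₁ S₂)))) :=
        ⟨Quotient.mk _ (Classical.arbitrary _)⟩
      exact Nat.card_pos
    have heq := σ.omega_joinF S₁ S₂
    have hcond : G.omega (σ.joinF S₁ S₂) = 1 ↔
        (K.omega S₁ = nblocks (σ.partKU S₁) ∧ H.omega S₂ = nblocks (σ.partHU S₂))
          ∧ nblocks (σ.partKU S₁ ⊔ σ.partHU S₂) = 1 := by
      constructor
      · intro hgo; refine ⟨⟨?_, ?_⟩, ?_⟩ <;> omega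
      · rintro ⟨⟨hx, hy'⟩, hz⟩; omega
    by_cases hgo : G.omega (σ.joinF S₁ S₂) = 1
    · rw [if_pos hgo]
      obtain ⟨⟨h1, h2⟩, h3⟩ := hcond.mp hgo
      rw [if_pos h3, if_pos ⟨h1, h2⟩, one_mul]
      have hle : Fintype.card G.V ≤ 1 + (σ.joinF S₁ S₂).card := by
        have := G.card_V_le_omega_add_card (σ.joinF S₁ S₂)
        omega
      rw [pow_sub_to_zpow hε hle, ← zpow_add₀ hε, ← zpow_add₀ hε]
      congr 1
      have hcV := σ.card_V_nsum
      have hcard := σ.card_joinF S₁ S₂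
      omega
    · rw [if_neg hgo]
      by_cases h3 : nblocks (σ.partKU S₁ ⊔ σ.partHU S₂) = 1
      · rw [if_pos h3, one_mul, if_neg (fun hc => hgo (hcond.mpr ⟨hc, h3⟩)), mul_zero]
      · rw [if_neg h3, zero_mul, mul_zero]
  rw [Finset.sum_congr rfl fun S₁ _ => Finset.sum_congr rfl fun S₂ _ => hper S₁ S₂]
  have hprod : ∀ q : Setoid ↥U × Setoid ↥U,
      σ.uvecK y q.1 * σ.uvecH y q.2
        = ∑ p : Finset K.E × Finset H.E,
            (@ite ℝ (σ.pairMap p = q) (Classical.propDecidable _) (σ.Fpair y p) 0) := by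
    rintro ⟨qA, qB⟩
    show σ.uvecK y qA * σ.uvecH y qB = _
    unfold uvecK uvecH
    rw [Finset.sum_mul_sum, Fintype.sum_prod_type]
    refine Finset.sum_congr rfl fun S₁ _ => Finset.sum_congr rfl fun S₂ _ => ?_
    by_cases hA : σ.partKU S₁ = qA
    · subst hA
      by_cases hB : σ.partHU S₂ = qB
      · subst hB
        by_cases h1 : K.omega S₁ = nblocks (σ.partKU S₁) <;>
          by_cases h2 : H.omega S₂ = nblocks (σ.partHU S₂) <;>
          simp [pairMap, Fpair, h1, h2]
      · simp [pairMap, Fpair, Prod.ext_iff, hB]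
    · simp [pairMap, Fpair, Prod.ext_iff, hA]
  have hRHS : ∑ A : Setoid ↥U, ∑ B : Setoid ↥U,
      Amat ↥U A B * σ.uvecK y A * σ.uvecH y B
      = ∑ S₁ : Finset K.E, ∑ S₂ : Finset H.E,
          Amat ↥U (σ.partKU S₁) (σ.partHU S₂) * σ.Fpair y (S₁, S₂) := by
    have e1 : ∑ A : Setoid ↥U, ∑ B : Setoid ↥U,
        Amat ↥U A B * σ.uvecK y A * σ.uvecH y B
        = ∑ q : Setoid ↥U × Setoid ↥U,
            Amat ↥U q.1 q.2 * (σ.uvecK y q.1 * σ.uvecH y q.2) := by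
      rw [Fintype.sum_prod_type]
      exact Finset.sum_congr rfl fun A _ => Finset.sum_congr rfl fun B _ => mul_assoc _ _ _
    rw [e1, Finset.sum_congr rfl fun q _ => by rw [hprod q]]
    refine (sumCollapseAux σ.pairMap (fun q : Setoid ↥U × Setoid ↥U => Amat ↥U q.1 q.2)
      (σ.Fpair y)).trans ?_
    rw [Fintype.sum_prod_type]
    rfl
  rw [hRHS, Finset.mul_sum]
  refine Finset.sum_congr rfl fun S₁ _ => ?_
  rw [Finset.mul_sum]

end NSum
lemma amat_pairing' (α : Type) [Finite α] [Nonempty α] (u v : Setoid α → ℝ) :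
    ∑ A : Setoid α, ∑ B : Setoid α,
        (Amat α)⁻¹ A B * (∑ C : Setoid α, Amat α A C * u C)
          * (∑ C : Setoid α, Amat α B C * v C)
      = ∑ A : Setoid α, ∑ B : Setoid α, Amat α A B * u A * v B :=
  amat_pairing α u v

/-- the splitting formula for `T(G;1,y)`, `y ≠ 1`, of an `n`-sum of
connected multigraphs, with coefficients from the inverse connectivity matrix. -/
theorem tutte_splitting_formula_x_eq_one
    (G K H : Multigraph) (U : Set G.V) (n : ℕ) (hn : 1 ≤ n)
    (sg : NSum G K H U) (hU : Nat.card ↥U = n)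
    (hK : K.omegaG = 1) (hH : H.omegaG = 1) (y : ℝ) (hy : y ≠ 1) :
    IsUnit (Amat ↥U) ∧
    G.tutte 1 y =
      ∑ A : Setoid ↥U, ∑ B : Setoid ↥U,
        (Amat ↥U)⁻¹ A B * (y - 1) ^ ((nblocks A : ℤ) + (nblocks B : ℤ) - (n : ℤ) - 1) *
          (sg.contractK A).tutte 1 y * (sg.contractH B).tutte 1 y := by
  classical
  have hε : y - 1 ≠ 0 := sub_ne_zero.mpr hy
  haveI hne : Nonempty ↥U := by
    have hpos : 0 < Nat.card ↥U := by omega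
    exact (Nat.card_pos_iff.mp hpos).1
  refine ⟨isUnit_Amat ↥U, ?_⟩
  rw [sg.tutte_G hK hH hne y hy, hU]
  have hterm : ∀ A B : Setoid ↥U,
      (Amat ↥U)⁻¹ A B * (y - 1) ^ ((nblocks A : ℤ) + (nblocks B : ℤ) - (n : ℤ) - 1) *
          (sg.contractK A).tutte 1 y * (sg.contractH B).tutte 1 y
      = (y - 1) ^ ((n : ℤ) + 1) *
          ((Amat ↥U)⁻¹ A B * (∑ C : Setoid ↥U, Amat ↥U A C * sg.uvecK y C)
            * (∑ C : Setoid ↥U, Amat ↥U B C * sg.uvecH y C)) := by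
    intro A B
    rw [sg.tutte_contractK A hK hne y hy, sg.tutte_contractH B hH hne y hy, hU]
    have hmerge : (y - 1) ^ ((nblocks A : ℤ) + (nblocks B : ℤ) - (n : ℤ) - 1)
        * (y - 1) ^ ((n : ℤ) + 1 - (nblocks A : ℤ))
        * (y - 1) ^ ((n : ℤ) + 1 - (nblocks B : ℤ))
        = (y - 1) ^ ((n : ℤ) + 1) := by
      rw [← zpow_add₀ hε, ← zpow_add₀ hε]
      congr 1
      ring
    rw [← hmerge]
    ring
  rw [Finset.sum_congr rfl fun A _ => Finset.sum_congr rfl fun B _ => hterm A B]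
  rw [Finset.sum_congr rfl fun A (_ : A ∈ Finset.univ) =>
    (Finset.mul_sum Finset.univ _ ((y - 1) ^ ((n : ℤ) + 1))).symm]
  rw [← Finset.mul_sum]
  congr 1
  exact (amat_pairing' ↥U (sg.uvecK y) (sg.uvecH y)).symm
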